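/- arXiv:2405.04475 — 5 statements merged into one kernel-verified Lean document; each statement's English description precedes it below -/
import Mathlib

section
/- If g : [0,1]^d → ℝ is α-Hölder continuous with constant L and exponent α ∈ (0,1], then for any k = (k1,...,kd) with k = min_j kj, the Bernstein-type approximation error satisfies ‖g − Σ_ν g(ν1/k1,...,νd/kd)·∏_j P_{νj,kj}‖_∞ ≤ d·L·(1/(2k) + 1/k²)^{α/2} in sup norm over [0,1]^d, where P_{ν,k}(z) = binom(k,ν) z^ν (1-z)^{k-ν}. -/
private lemma rpow_two_add_le {a b q : ℝ} (ha : 0 ≤ a) (hb : 0 ≤ b)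
    (hq0 : 0 ≤ q) (hq1 : q ≤ 1) : (a + b) ^ q ≤ a ^ q + b ^ q := by
  lift a to NNReal using ha
  lift b to NNReal using hb
  have := NNReal.rpow_add_le_add_rpow a b hq0 hq1
  exact_mod_cast this

private lemma rpow_sum_le_sum_rpow' {ι : Type*} (s : Finset ι) (f : ι → ℝ)
    (hf : ∀ i, 0 ≤ f i) {q : ℝ} (hq0 : 0 < q) (hq1 : q ≤ 1) :
    (∑ i ∈ s, f i) ^ q ≤ ∑ i ∈ s, f i ^ q := by
  classical
  induction s using Finset.cons_induction with
  | empty => simp [Real.zero_rpow hq0.ne']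
  | cons a s ha ih =>
    rw [Finset.sum_cons, Finset.sum_cons]
    calc (f a + ∑ i ∈ s, f i) ^ q ≤ f a ^ q + (∑ i ∈ s, f i) ^ q :=
          rpow_two_add_le (hf a) (Finset.sum_nonneg fun i _ => hf i) hq0.le hq1
      _ ≤ f a ^ q + ∑ i ∈ s, f i ^ q := by linarith

private lemma jensen_rpow {ι : Type*} [Fintype ι] (w t : ι → ℝ)
    (hw : ∀ i, 0 ≤ w i) (hw1 : ∑ i, w i = 1) (ht : ∀ i, 0 ≤ t i)
    {q : ℝ} (hq0 : 0 < q) (hq1 : q ≤ 1) :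
    ∑ i, w i * t i ^ q ≤ (∑ i, w i * t i) ^ q := by
  have hp : 1 ≤ 1 / q := by rw [le_div_iff₀ hq0]; linarith
  have h := Real.arith_mean_le_rpow_mean Finset.univ w (fun i => t i ^ q)
      (fun i _ => hw i) hw1 (fun i _ => Real.rpow_nonneg (ht i) q) hp
  have hsimp : ∀ i, (t i ^ q) ^ (1 / q) = t i := by
    intro i
    rw [← Real.rpow_mul (ht i), mul_one_div_cancel hq0.ne', Real.rpow_one]
  simp only [hsimp] at h
  rwa [one_div_one_div] at h

private lemma marginal_sum {d : ℕ} (n : Fin d → ℕ) (P : ∀ j, Fin (n j + 1) → ℝ)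
    (h1 : ∀ j, ∑ i, P j i = 1) (j0 : Fin d) (h : Fin (n j0 + 1) → ℝ) :
    ∑ ν : ∀ j, Fin (n j + 1), h (ν j0) * ∏ j, P j (ν j) = ∑ i, h i * P j0 i := by
  classical
  set H : ∀ j, Fin (n j + 1) → ℝ :=
    Function.update (fun j (_ : Fin (n j + 1)) => (1 : ℝ)) j0 h with hH
  have hHj0 : H j0 = h := by rw [hH]; simp
  have hHne : ∀ j, j ≠ j0 → H j = fun _ => 1 := by
    intro j hj; rw [hH]; simp [Function.update_of_ne hj]
  have key : ∀ ν : ∀ j, Fin (n j + 1),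
      h (ν j0) * ∏ j, P j (ν j) = ∏ j, H j (ν j) * P j (ν j) := by
    intro ν
    rw [Finset.prod_mul_distrib]
    congr 1
    symm
    rw [Finset.prod_eq_single j0 (fun b _ hb => by rw [hHne b hb])
      (fun hm => absurd (Finset.mem_univ j0) hm), hHj0]
  rw [Finset.sum_congr rfl fun ν _ => key ν,
    ← Fintype.prod_sum (fun j (i : Fin (n j + 1)) => H j i * P j i),
    Finset.prod_eq_single j0 (fun b _ hb => by simp [hHne b hb, h1 b])
      (fun hm => absurd (Finset.mem_univ j0) hm), hHj0]

/-- Bernstein approximation rate for α-Hölder functions. -/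
theorem bernstein_holder_rate (d : ℕ) (hd : 0 < d)
    (g : (Fin d → ℝ) → ℝ) (L : ℝ) (hL : 0 ≤ L) (α : ℝ) (hα0 : 0 < α) (hα1 : α ≤ 1)
    (hHolder : ∀ x ∈ Set.Icc (0 : Fin d → ℝ) 1, ∀ y ∈ Set.Icc (0 : Fin d → ℝ) 1,
      |g x - g y| ≤ L * (Real.sqrt (∑ j, (x j - y j) ^ 2)) ^ α)
    (kv : Fin d → ℕ) (k : ℕ) (hk1 : 1 ≤ k)
    (hkmin : ∀ j, k ≤ kv j) (hkeq : ∃ j, kv j = k) :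
    ∀ z ∈ Set.Icc (0 : Fin d → ℝ) 1,
      |g z - ∑ ν : (∀ j, Fin (kv j + 1)),
          g (fun j => (ν j : ℝ) / (kv j : ℝ)) *
            ∏ j, ((kv j).choose (ν j) : ℝ) * z j ^ (ν j : ℕ) *
              (1 - z j) ^ (kv j - (ν j : ℕ))|
        ≤ d * L * (1 / (2 * k) + 1 / (k : ℝ) ^ 2) ^ (α / 2) := by
  classical
  intro z hz
  have hz0 : ∀ j, 0 ≤ z j := fun j => Pi.le_def.mp hz.1 j
  have hz1 : ∀ j, z j ≤ 1 := fun j => Pi.le_def.mp hz.2 j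
  set q : ℝ := α / 2 with hq
  have hq0 : 0 < q := by positivity
  have hq1 : q ≤ 1 := by rw [hq]; linarith
  have hkpos : (0 : ℝ) < k := by exact_mod_cast hk1
  have hkvpos : ∀ j, (0 : ℝ) < kv j := fun j => by
    have := hk1.trans (hkmin j); exact_mod_cast this
  -- the weights
  set P : ∀ j, Fin (kv j + 1) → ℝ := fun j i =>
    ((kv j).choose (i : ℕ) : ℝ) * z j ^ (i : ℕ) * (1 - z j) ^ (kv j - (i : ℕ)) with hP
  set W : (∀ j, Fin (kv j + 1)) → ℝ := fun ν => ∏ j, P j (ν j) with hW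
  set μ : (∀ j, Fin (kv j + 1)) → (Fin d → ℝ) := fun ν j => (ν j : ℝ) / (kv j : ℝ) with hμ
  -- basic facts about P via mathlib's bernstein
  have hx : ∀ j, z j ∈ Set.Icc (0:ℝ) 1 := fun j => ⟨hz0 j, hz1 j⟩
  have hPb : ∀ j (i : Fin (kv j + 1)), P j i = bernstein (kv j) i ⟨z j, hx j⟩ := by
    intro j i; rw [bernstein_apply]
  have hP0 : ∀ j (i : Fin (kv j + 1)), 0 ≤ P j i := by
    intro j i; rw [hPb]; exact bernstein_nonneg
  have hPsum : ∀ j, ∑ i, P j i = 1 := by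
    intro j
    simp only [hPb]
    exact bernstein.probability (kv j) ⟨z j, hx j⟩
  have hPvar : ∀ j, ∑ i : Fin (kv j + 1), (z j - (i : ℝ) / (kv j : ℝ)) ^ 2 * P j i
      = z j * (1 - z j) / (kv j : ℝ) := by
    intro j
    simp only [hPb]
    exact bernstein.variance (by exact_mod_cast (hkvpos j).ne') ⟨z j, hx j⟩
  have hW0 : ∀ ν, 0 ≤ W ν := fun ν => Finset.prod_nonneg fun j _ => hP0 j (ν j)
  have hWsum : ∑ ν : ∀ j, Fin (kv j + 1), W ν = 1 := by
    rw [hW]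
    rw [← Fintype.prod_sum P]
    simp [hPsum]
  -- membership of grid points
  have hμmem : ∀ ν, μ ν ∈ Set.Icc (0 : Fin d → ℝ) 1 := by
    intro ν
    refine ⟨Pi.le_def.mpr fun j => ?_, Pi.le_def.mpr fun j => ?_⟩
    · exact div_nonneg (Nat.cast_nonneg _) (Nat.cast_nonneg _)
    · have hle : ((ν j : ℕ) : ℝ) ≤ (kv j : ℝ) := by exact_mod_cast Fin.is_le (ν j)
      exact (div_le_one (hkvpos j)).mpr hle
  -- the target sum equals ∑ g(μ ν) * W ν
  have htarget : (∑ ν : (∀ j, Fin (kv j + 1)),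
      g (fun j => (ν j : ℝ) / (kv j : ℝ)) *
        ∏ j, ((kv j).choose (ν j) : ℝ) * z j ^ (ν j : ℕ) *
          (1 - z j) ^ (kv j - (ν j : ℕ)))
      = ∑ ν : (∀ j, Fin (kv j + 1)), g (μ ν) * W ν := rfl
  rw [htarget]
  -- decomposition
  have hdecomp : g z - ∑ ν : (∀ j, Fin (kv j + 1)), g (μ ν) * W ν
      = ∑ ν : (∀ j, Fin (kv j + 1)), (g z - g (μ ν)) * W ν := by
    rw [Finset.sum_congr rfl (fun ν _ => sub_mul (g z) (g (μ ν)) (W ν)),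
      Finset.sum_sub_distrib, ← Finset.mul_sum, hWsum, mul_one]
  rw [hdecomp]
  -- Hölder + subadditivity bound pointwise
  have hpt : ∀ ν : (∀ j, Fin (kv j + 1)),
      |g z - g (μ ν)| ≤ L * ∑ j, ((z j - μ ν j) ^ 2) ^ q := by
    intro ν
    have h0 := hHolder z hz (μ ν) (hμmem ν)
    set S : ℝ := ∑ j, (z j - μ ν j) ^ 2 with hS
    have hS0 : 0 ≤ S := Finset.sum_nonneg fun j _ => sq_nonneg _
    have hsqrt : Real.sqrt S ^ α = S ^ q := by
      rw [Real.sqrt_eq_rpow, ← Real.rpow_mul hS0]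
      congr 1
      rw [hq]; ring
    have hsub : S ^ q ≤ ∑ j, ((z j - μ ν j) ^ 2) ^ q :=
      rpow_sum_le_sum_rpow' Finset.univ _ (fun j => sq_nonneg _) hq0 hq1
    calc |g z - g (μ ν)| ≤ L * Real.sqrt S ^ α := h0
      _ = L * S ^ q := by rw [hsqrt]
      _ ≤ L * ∑ j, ((z j - μ ν j) ^ 2) ^ q := mul_le_mul_of_nonneg_left hsub hL
  -- the per-coordinate bound
  set B : ℝ := (1 / (2 * k) + 1 / (k : ℝ) ^ 2) ^ q with hB
  have hcoord : ∀ j : Fin d,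
      (∑ ν : (∀ j, Fin (kv j + 1)), ((z j - μ ν j) ^ 2) ^ q * W ν) ≤ B := by
    intro j
    have hmarg := marginal_sum kv P hPsum j (fun i => ((z j - (i : ℝ) / (kv j : ℝ)) ^ 2) ^ q)
    have hjensen : ∑ i : Fin (kv j + 1), ((z j - (i : ℝ) / (kv j : ℝ)) ^ 2) ^ q * P j i
        ≤ (∑ i : Fin (kv j + 1), (z j - (i : ℝ) / (kv j : ℝ)) ^ 2 * P j i) ^ q := by
      have := jensen_rpow (P j) (fun i => (z j - (i : ℝ) / (kv j : ℝ)) ^ 2)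
        (hP0 j) (hPsum j) (fun i => sq_nonneg _) hq0 hq1
      calc ∑ i : Fin (kv j + 1), ((z j - (i : ℝ) / (kv j : ℝ)) ^ 2) ^ q * P j i
          = ∑ i : Fin (kv j + 1), P j i * ((z j - (i : ℝ) / (kv j : ℝ)) ^ 2) ^ q :=
            Finset.sum_congr rfl fun i _ => mul_comm _ _
        _ ≤ (∑ i : Fin (kv j + 1), P j i * (z j - (i : ℝ) / (kv j : ℝ)) ^ 2) ^ q := this
        _ = (∑ i : Fin (kv j + 1), (z j - (i : ℝ) / (kv j : ℝ)) ^ 2 * P j i) ^ q := by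
            rw [Finset.sum_congr rfl fun i _ => mul_comm (P j i) _]
    have hvar2 : (∑ i : Fin (kv j + 1), (z j - (i : ℝ) / (kv j : ℝ)) ^ 2 * P j i) ^ q
        = (z j * (1 - z j) / (kv j : ℝ)) ^ q := by rw [hPvar j]
    have hvb : z j * (1 - z j) / (kv j : ℝ) ≤ 1 / (2 * k) + 1 / (k : ℝ) ^ 2 := by
      have h14 : z j * (1 - z j) ≤ 1 / 4 := by nlinarith [sq_nonneg (z j - 1 / 2)]
      have hkk : (k : ℝ) ≤ (kv j : ℝ) := by exact_mod_cast hkmin j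
      have h1 : z j * (1 - z j) / (kv j : ℝ) ≤ (1 / 4) / (k : ℝ) :=
        div_le_div₀ (by norm_num) h14 hkpos hkk
      have h2 : (1 / 4) / (k : ℝ) ≤ 1 / (2 * k) := by
        rw [div_le_div_iff₀ hkpos (by positivity)]
        nlinarith
      have h3 : (0:ℝ) ≤ 1 / (k : ℝ) ^ 2 := by positivity
      linarith
    have hfinal : (z j * (1 - z j) / (kv j : ℝ)) ^ q ≤ B := by
      rw [hB]
      apply Real.rpow_le_rpow _ hvb hq0.le
      have h1z : 0 ≤ 1 - z j := by linarith [hz1 j]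
      exact div_nonneg (mul_nonneg (hz0 j) h1z) (hkvpos j).le
    calc (∑ ν : (∀ j, Fin (kv j + 1)), ((z j - μ ν j) ^ 2) ^ q * W ν)
        = ∑ i : Fin (kv j + 1), ((z j - (i : ℝ) / (kv j : ℝ)) ^ 2) ^ q * P j i := hmarg
      _ ≤ (∑ i : Fin (kv j + 1), (z j - (i : ℝ) / (kv j : ℝ)) ^ 2 * P j i) ^ q := hjensen
      _ = (z j * (1 - z j) / (kv j : ℝ)) ^ q := hvar2
      _ ≤ B := hfinal
  -- put everything together
  calc |∑ ν : (∀ j, Fin (kv j + 1)), (g z - g (μ ν)) * W ν|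
      ≤ ∑ ν : (∀ j, Fin (kv j + 1)), |(g z - g (μ ν)) * W ν| :=
        Finset.abs_sum_le_sum_abs _ _
    _ = ∑ ν : (∀ j, Fin (kv j + 1)), |g z - g (μ ν)| * W ν := by
        refine Finset.sum_congr rfl fun ν _ => ?_
        rw [abs_mul, abs_of_nonneg (hW0 ν)]
    _ ≤ ∑ ν : (∀ j, Fin (kv j + 1)), (L * ∑ j, ((z j - μ ν j) ^ 2) ^ q) * W ν := by
        refine Finset.sum_le_sum fun ν _ => mul_le_mul_of_nonneg_right (hpt ν) (hW0 ν)
    _ = L * ∑ j, ∑ ν : (∀ j, Fin (kv j + 1)), ((z j - μ ν j) ^ 2) ^ q * W ν := by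
        have hst : ∀ ν : (∀ j, Fin (kv j + 1)),
            (L * ∑ j, ((z j - μ ν j) ^ 2) ^ q) * W ν
              = L * ∑ j, ((z j - μ ν j) ^ 2) ^ q * W ν := fun ν => by
          rw [mul_assoc, Finset.sum_mul]
        rw [Finset.sum_congr rfl fun ν _ => hst ν, ← Finset.mul_sum, Finset.sum_comm]
    _ ≤ L * ∑ _j : Fin d, B := by
        refine mul_le_mul_of_nonneg_left (Finset.sum_le_sum fun j _ => hcoord j) hL
    _ = d * L * B := by
        rw [Finset.sum_const, Finset.card_univ, Fintype.card_fin, nsmul_eq_mul]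
        ring
end

section
/- Let μ be a probability measure on [0,1]^2 whose both one-dimensional marginals are the uniform distribution on [0,1]. Then the density b(z1,z2) = Σ_{ν1=1}^{k1} Σ_{ν2=1}^{k2} W_{ν1,ν2} β(z1; ν1, k1−ν1+1) β(z2; ν2, k2−ν2+1), with weights W_{ν1,ν2} = μ(((ν1−1)/k1, ν1/k1] × ((ν2−1)/k2, ν2/k2]), defines a probability measure on [0,1]^2 whose one-dimensional marginals are uniform on [0,1]. -/
open MeasureTheory

/-- The Beta(ν, k−ν+1) density with integer parameters. -/
noncomputable def betaDens (k ν : ℕ) (z : ℝ) : ℝ :=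
  (k : ℝ) * ((k - 1).choose (ν - 1) : ℝ) * z ^ (ν - 1) * (1 - z) ^ (k - ν)


open scoped ENNReal

lemma prod_fact (m n : ℕ) :
    m.factorial * ∏ j ∈ Finset.range (n + 1), (m + 1 + j) = (m + n + 1).factorial := by
  induction n with
  | zero => simp [Nat.factorial_succ, Nat.mul_comm]
  | succ n ih =>
    rw [Finset.prod_range_succ, ← Nat.mul_assoc, ih,
      show m + 1 + (n+1) = (m + n + 1) + 1 from by ring,
      show m + (n+1) + 1 = (m + n + 1) + 1 from by ring, Nat.factorial_succ (m+n+1)]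
    ring

lemma betaInt (m n : ℕ) :
    ∫ x in (0:ℝ)..1, x ^ m * (1 - x) ^ n =
      (m.factorial * n.factorial : ℝ) / (m + n + 1).factorial := by
  have h := Complex.betaIntegral_eval_nat_add_one_right
    (u := (m : ℂ) + 1) (by simp; positivity) n
  rw [Complex.betaIntegral] at h
  have heq : ∀ x : ℝ, x ∈ Set.uIcc (0:ℝ) 1 →
      (x:ℂ) ^ ((m:ℂ) + 1 - 1) * (1 - (x:ℂ)) ^ ((n:ℂ) + 1 - 1)
        = ((x ^ m * (1 - x) ^ n : ℝ) : ℂ) := by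
    intro x hx
    push_cast
    rw [add_sub_cancel_right, add_sub_cancel_right,
      Complex.cpow_natCast, Complex.cpow_natCast]
  rw [intervalIntegral.integral_congr heq] at h
  rw [intervalIntegral.integral_ofReal] at h
  have hprod : (m.factorial : ℂ) * ∏ j ∈ Finset.range (n + 1), ((m:ℂ) + 1 + j)
      = ((m + n + 1).factorial : ℂ) := by
    rw [← prod_fact m n]; push_cast; ring_nf
  have : ((∫ x in (0:ℝ)..1, x ^ m * (1 - x) ^ n : ℝ) : ℂ)
      = (m.factorial * n.factorial : ℝ) / ((m + n + 1).factorial : ℝ) := by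
    have hm : (m.factorial : ℂ) ≠ 0 := by exact_mod_cast Nat.factorial_ne_zero m
    rw [h, ← mul_div_mul_left _ _ hm, hprod]
    push_cast
    ring
  exact_mod_cast this

lemma betaDens_nonneg {k ν : ℕ} {z : ℝ} (hz : z ∈ Set.Icc (0:ℝ) 1) : 0 ≤ betaDens k ν z := by
  unfold betaDens
  have h1 : (0:ℝ) ≤ z := hz.1
  have h2 : (0:ℝ) ≤ 1 - z := by linarith [hz.2]
  positivity

lemma betaDens_continuous (k ν : ℕ) : Continuous (betaDens k ν) := by
  unfold betaDens; fun_prop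

lemma betaDens_integral {k ν : ℕ} (h1 : 1 ≤ ν) (h2 : ν ≤ k) :
    ∫ x in Set.Icc (0:ℝ) 1, betaDens k ν x = 1 := by
  have key : ∫ x in (0:ℝ)..1, betaDens k ν x = 1 := by
    unfold betaDens
    rw [show (fun x : ℝ => (k:ℝ) * ((k-1).choose (ν-1) : ℝ) * x ^ (ν-1) * (1-x) ^ (k-ν))
        = fun x : ℝ => ((k:ℝ) * ((k-1).choose (ν-1) : ℝ)) * (x ^ (ν-1) * (1-x) ^ (k-ν))
        from by funext x; ring]
    rw [intervalIntegral.integral_const_mul, betaInt]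
    have hmn : (ν - 1) + (k - ν) + 1 = k := by omega
    rw [hmn]
    have hch : (k-1).choose (ν-1) * (ν-1).factorial * ((k-1) - (ν-1)).factorial
        = (k-1).factorial := Nat.choose_mul_factorial_mul_factorial (by omega)
    have hkν : (k-1) - (ν-1) = k - ν := by omega
    rw [hkν] at hch
    have hk0 : (0:ℝ) < k := by exact_mod_cast (by omega : 0 < k)
    have hfac : (k.factorial : ℝ) = k * (k-1).factorial := by
      rw [show k = (k-1) + 1 from by omega, Nat.factorial_succ]
      push_cast [show k - 1 + 1 = k from by omega]
      ring
    have hfacn : ((k-1).factorial : ℝ) ≠ 0 := by exact_mod_cast Nat.factorial_ne_zero _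
    field_simp
    rw [hfac, ← hch]
    push_cast
    ring
  rw [MeasureTheory.integral_Icc_eq_integral_Ioc, ← intervalIntegral.integral_of_le zero_le_one, key]

lemma sum_betaDens (k : ℕ) (hk : 0 < k) (z : ℝ) :
    ∑ ν : Fin k, betaDens k ((ν : ℕ) + 1) z = k := by
  unfold betaDens
  simp only [Nat.add_sub_cancel]
  have h := add_pow z (1 - z) (k - 1)
  rw [show z + (1 - z) = 1 from by ring, one_pow] at h
  rw [show k - 1 + 1 = k from by omega] at h
  calc ∑ x : Fin k, (k:ℝ) * ((k-1).choose (x:ℕ)) * z ^ (x:ℕ) * (1-z) ^ (k - ((x:ℕ)+1))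
      = ∑ m ∈ Finset.range k, (k:ℝ) * (z^m * (1-z)^(k-1-m) * ((k-1).choose m)) := by
        rw [Fin.sum_univ_eq_sum_range (fun i => (k:ℝ) * ((k-1).choose i) * z ^ i * (1-z) ^ (k - (i+1)))]
        refine Finset.sum_congr rfl fun i hi => ?_
        rw [show k - (i+1) = k-1-i from by omega]; ring
    _ = (k:ℝ) * ∑ m ∈ Finset.range k, z^m*(1-z)^(k-1-m)*((k-1).choose m) := by
        rw [Finset.mul_sum]
    _ = k := by rw [← h, mul_one]

lemma partition_Ioc (k : ℕ) (hk : 0 < k) :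
    ⋃ ν : Fin k, Set.Ioc ((ν:ℝ)/k) ((((ν:ℕ)+1 : ℕ):ℝ)/(k:ℝ)) = Set.Ioc (0:ℝ) 1 := by
  have hk' : (0:ℝ) < k := Nat.cast_pos.mpr hk
  ext y
  simp only [Set.mem_iUnion, Set.mem_Ioc]
  constructor
  · rintro ⟨ν, h1, h2⟩
    have h0 : (0:ℝ) ≤ (ν:ℝ)/k := by positivity
    have hν : ((ν:ℕ):ℝ) + 1 ≤ (k:ℝ) := by exact_mod_cast ν.isLt
    refine ⟨lt_of_le_of_lt h0 h1, h2.trans ?_⟩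
    rw [div_le_one hk']
    push_cast
    linarith
  · rintro ⟨h0, h1⟩
    have hyk : 0 < y * k := by positivity
    set n := ⌈y * k⌉₊ with hn
    have hn1 : 1 ≤ n := Nat.one_le_ceil_iff.mpr hyk
    have hnk : n ≤ k := Nat.ceil_le.mpr (by nlinarith)
    refine ⟨⟨n-1, by omega⟩, ?_, ?_⟩
    · rw [div_lt_iff₀ hk']
      have hlt : (n : ℝ) < y*k + 1 := Nat.ceil_lt_add_one (le_of_lt hyk)
      have : ((n-1 : ℕ) : ℝ) = (n:ℝ) - 1 := by push_cast [hn1]; ring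
      simp only [this]
      linarith
    · have hle : y*k ≤ (n:ℝ) := Nat.le_ceil _
      have : (n-1) + 1 = n := by omega
      simp only [this]
      rw [le_div_iff₀ hk']
      exact hle

lemma row_sum {k1 k2 : ℕ} (hk1 : 0 < k1) (hk2 : 0 < k2)
    (μ : Measure (ℝ × ℝ)) [IsProbabilityMeasure μ]
    (hm1 : μ.map Prod.fst = volume.restrict (Set.Icc (0:ℝ) 1))
    (hm2 : μ.map Prod.snd = volume.restrict (Set.Icc (0:ℝ) 1))
    (ν1 : Fin k1) :
    ∑ ν2 : Fin k2, (μ (Set.Ioc ((ν1 : ℝ) / k1) (((ν1 : ℕ) + 1 : ℕ) / (k1 : ℝ)) ×ˢ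
          Set.Ioc ((ν2 : ℝ) / k2) (((ν2 : ℕ) + 1 : ℕ) / (k2 : ℝ)))).toReal = 1 / k1 := by
  set A := Set.Ioc ((ν1 : ℝ) / k1) (((ν1 : ℕ) + 1 : ℕ) / (k1 : ℝ)) with hA
  have hk1' : (0:ℝ) < k1 := Nat.cast_pos.mpr hk1
  have hk2' : (0:ℝ) < k2 := Nat.cast_pos.mpr hk2
  have hAmeas : MeasurableSet A := measurableSet_Ioc
  have hsum : ∑ ν2 : Fin k2,
      μ (A ×ˢ Set.Ioc ((ν2:ℝ)/k2) ((((ν2:ℕ)+1:ℕ):ℝ)/(k2:ℝ))) = μ (A ×ˢ Set.Ioc (0:ℝ) 1) := by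
    rw [← partition_Ioc k2 hk2, Set.prod_iUnion,
      measure_iUnion ?_ (fun i => hAmeas.prod measurableSet_Ioc), tsum_fintype]
    intro i j hij
    refine Set.disjoint_prod.mpr (Or.inr ?_)
    rcases Ne.lt_or_gt (fun h : (i:ℕ) = (j:ℕ) => hij (Fin.ext h)) with h | h
    · rw [Set.Ioc_disjoint_Ioc]
      refine le_trans (min_le_left _ _) (le_trans ?_ (le_max_right _ _))
      gcongr
      exact_mod_cast Nat.succ_le_of_lt h
    · rw [Set.Ioc_disjoint_Ioc]
      refine le_trans (min_le_right _ _) (le_trans ?_ (le_max_left _ _))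
      gcongr
      exact_mod_cast Nat.succ_le_of_lt h
  have hz : μ (Prod.snd ⁻¹' ((Set.Ioc (0:ℝ) 1)ᶜ)) = 0 := by
    rw [← Measure.map_apply measurable_snd measurableSet_Ioc.compl, hm2,
      Measure.restrict_apply measurableSet_Ioc.compl]
    have : (Set.Ioc (0:ℝ) 1)ᶜ ∩ Set.Icc 0 1 = {0} := by
      ext x
      simp only [Set.mem_inter_iff, Set.mem_compl_iff, Set.mem_Ioc, Set.mem_Icc,
        Set.mem_singleton_iff, not_and_or, not_lt, not_le]
      constructor
      · rintro ⟨h1 | h1, h2, h3⟩ <;> linarith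
      · rintro rfl; exact ⟨Or.inl le_rfl, le_rfl, zero_le_one⟩
    rw [this]
    exact Real.volume_singleton
  have h01 : μ (A ×ˢ Set.Ioc (0:ℝ) 1) = μ (A ×ˢ Set.univ) := by
    apply le_antisymm (measure_mono (Set.prod_mono_right (Set.subset_univ _)))
    calc μ (A ×ˢ Set.univ)
        ≤ μ ((A ×ˢ Set.Ioc (0:ℝ) 1) ∪ Prod.snd ⁻¹' ((Set.Ioc (0:ℝ) 1)ᶜ)) := by
          apply measure_mono
          rintro ⟨x, y⟩ ⟨hx, -⟩
          by_cases hy : y ∈ Set.Ioc (0:ℝ) 1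
          · exact Or.inl ⟨hx, hy⟩
          · exact Or.inr hy
      _ ≤ μ (A ×ˢ Set.Ioc (0:ℝ) 1) + μ (Prod.snd ⁻¹' ((Set.Ioc (0:ℝ) 1)ᶜ)) :=
          measure_union_le _ _
      _ = μ (A ×ˢ Set.Ioc (0:ℝ) 1) := by rw [hz, add_zero]
  have huniv : μ (A ×ˢ Set.univ) = ENNReal.ofReal (1 / k1) := by
    rw [Set.prod_univ, ← Measure.map_apply measurable_fst hAmeas, hm1,
      Measure.restrict_apply hAmeas]
    have hν : ((ν1:ℕ):ℝ) + 1 ≤ (k1:ℝ) := by exact_mod_cast ν1.isLt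
    have hsub : A ∩ Set.Icc 0 1 = A := by
      rw [Set.inter_eq_left, hA]
      intro x hx
      have h0 : (0:ℝ) ≤ (ν1:ℝ)/k1 := by positivity
      have h1 : ((((ν1:ℕ)+1:ℕ)):ℝ)/(k1:ℝ) ≤ 1 := by
        rw [div_le_one hk1']; push_cast; linarith
      exact ⟨le_of_lt (lt_of_le_of_lt h0 hx.1), hx.2.trans h1⟩
    rw [hsub, hA, Real.volume_Ioc]
    congr 1
    push_cast
    field_simp
    ring
  calc ∑ ν2 : Fin k2, (μ (A ×ˢ Set.Ioc ((ν2:ℝ)/k2) ((((ν2:ℕ)+1:ℕ):ℝ)/(k2:ℝ)))).toReal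
      = (∑ ν2 : Fin k2, μ (A ×ˢ Set.Ioc ((ν2:ℝ)/k2) ((((ν2:ℕ)+1:ℕ):ℝ)/(k2:ℝ)))).toReal :=
        (ENNReal.toReal_sum (fun i _ => measure_ne_top μ _)).symm
    _ = 1 / k1 := by rw [hsum, h01, huniv, ENNReal.toReal_ofReal (by positivity)]

lemma lint_inner {k1 k2 : ℕ} (hk1 : 0 < k1) (hk2 : 0 < k2)
    (W : Fin k1 → Fin k2 → ℝ) (hW0 : ∀ ν1 ν2, 0 ≤ W ν1 ν2)
    (hrow : ∀ ν1, ∑ ν2 : Fin k2, W ν1 ν2 = 1 / k1)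
    {x : ℝ} (hx : x ∈ Set.Icc (0:ℝ) 1) :
    ∫⁻ y in Set.Icc (0:ℝ) 1, ENNReal.ofReal
      (∑ ν1 : Fin k1, ∑ ν2 : Fin k2,
        W ν1 ν2 * betaDens k1 ((ν1:ℕ)+1) x * betaDens k2 ((ν2:ℕ)+1) y) = 1 := by
  set g : ℝ → ℝ := fun y => ∑ ν1 : Fin k1, ∑ ν2 : Fin k2,
    W ν1 ν2 * betaDens k1 ((ν1:ℕ)+1) x * betaDens k2 ((ν2:ℕ)+1) y with hg
  have hcont : Continuous g := by
    apply continuous_finset_sum; intro i _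
    apply continuous_finset_sum; intro j _
    exact continuous_const.mul (betaDens_continuous k2 _)
  have hint : IntegrableOn g (Set.Icc (0:ℝ) 1) := hcont.integrableOn_Icc
  have hnn : 0 ≤ᵐ[volume.restrict (Set.Icc (0:ℝ) 1)] g := by
    refine (ae_restrict_iff' measurableSet_Icc).mpr (Filter.Eventually.of_forall fun y hy => ?_)
    refine Finset.sum_nonneg fun i _ => Finset.sum_nonneg fun j _ => ?_
    exact mul_nonneg (mul_nonneg (hW0 i j) (betaDens_nonneg hx)) (betaDens_nonneg hy)
  rw [← MeasureTheory.ofReal_integral_eq_lintegral_ofReal hint hnn]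
  have hIg : ∫ y in Set.Icc (0:ℝ) 1, g y = 1 := by
    rw [hg]
    rw [MeasureTheory.integral_finset_sum _ (fun i _ => ?_)]
    swap
    · apply Continuous.integrableOn_Icc
      apply continuous_finset_sum; intro j _
      exact continuous_const.mul (betaDens_continuous k2 _)
    have hterm : ∀ i : Fin k1,
        (∫ y in Set.Icc (0:ℝ) 1, ∑ ν2 : Fin k2,
          W i ν2 * betaDens k1 ((i:ℕ)+1) x * betaDens k2 ((ν2:ℕ)+1) y)
        = (1 / (k1:ℝ)) * betaDens k1 ((i:ℕ)+1) x := by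
      intro i
      rw [MeasureTheory.integral_finset_sum _
        (fun j _ => (show Continuous fun y => W i j * betaDens k1 ((i:ℕ)+1) x * betaDens k2 ((j:ℕ)+1) y from continuous_const.mul (betaDens_continuous k2 _)).integrableOn_Icc)]
      have : ∀ j : Fin k2,
          (∫ y in Set.Icc (0:ℝ) 1, W i j * betaDens k1 ((i:ℕ)+1) x * betaDens k2 ((j:ℕ)+1) y)
          = W i j * betaDens k1 ((i:ℕ)+1) x := by
        intro j
        rw [integral_const_mul,
          betaDens_integral (by omega) (by exact_mod_cast j.isLt), mul_one]
      simp_rw [this]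
      rw [← Finset.sum_mul, hrow i]
    simp_rw [hterm]
    rw [← Finset.mul_sum, sum_betaDens k1 hk1 x, one_div,
      inv_mul_cancel₀ (by exact_mod_cast hk1.ne' : (k1:ℝ) ≠ 0)]
  rw [hIg, ENNReal.ofReal_one]

/-- the Bernstein copula density built from the grid-cell masses of a
probability measure on [0,1]² with uniform marginals defines a probability measure
on [0,1]² with uniform marginals. -/
theorem bernstein_copula_measure (k1 k2 : ℕ) (hk1 : 0 < k1) (hk2 : 0 < k2)
    (μ : Measure (ℝ × ℝ)) [IsProbabilityMeasure μ]
    (hsupp : μ (Set.Icc 0 1 ×ˢ Set.Icc (0 : ℝ) 1) = 1)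
    (hm1 : μ.map Prod.fst = volume.restrict (Set.Icc (0 : ℝ) 1))
    (hm2 : μ.map Prod.snd = volume.restrict (Set.Icc (0 : ℝ) 1))
    (W : Fin k1 → Fin k2 → ℝ)
    (hW : ∀ ν1 ν2, W ν1 ν2 =
      (μ (Set.Ioc ((ν1 : ℝ) / k1) (((ν1 : ℕ) + 1 : ℕ) / (k1 : ℝ)) ×ˢ
          Set.Ioc ((ν2 : ℝ) / k2) (((ν2 : ℕ) + 1 : ℕ) / (k2 : ℝ)))).toReal)
    (b : ℝ → ℝ → ℝ)
    (hb : ∀ z1 z2, b z1 z2 = ∑ ν1 : Fin k1, ∑ ν2 : Fin k2,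
      W ν1 ν2 * betaDens k1 ((ν1 : ℕ) + 1) z1 * betaDens k2 ((ν2 : ℕ) + 1) z2) :
    IsProbabilityMeasure
        ((volume.restrict (Set.Icc 0 1 ×ˢ Set.Icc (0 : ℝ) 1)).withDensity
          (fun p => ENNReal.ofReal (b p.1 p.2))) ∧
    ((volume.restrict (Set.Icc 0 1 ×ˢ Set.Icc (0 : ℝ) 1)).withDensity
          (fun p => ENNReal.ofReal (b p.1 p.2))).map Prod.fst =
        volume.restrict (Set.Icc (0 : ℝ) 1) ∧
    ((volume.restrict (Set.Icc 0 1 ×ˢ Set.Icc (0 : ℝ) 1)).withDensity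
          (fun p => ENNReal.ofReal (b p.1 p.2))).map Prod.snd =
        volume.restrict (Set.Icc (0 : ℝ) 1) := by
  set I : Set ℝ := Set.Icc (0:ℝ) 1 with hI
  set μ1 : Measure ℝ := volume.restrict I with hμ1
  set f : ℝ × ℝ → ℝ≥0∞ := fun p => ENNReal.ofReal (b p.1 p.2) with hf
  have hW0 : ∀ ν1 ν2, 0 ≤ W ν1 ν2 := fun ν1 ν2 => (hW ν1 ν2) ▸ ENNReal.toReal_nonneg
  have hrow : ∀ ν1 : Fin k1, ∑ ν2 : Fin k2, W ν1 ν2 = 1 / k1 := by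
    intro ν1
    simp_rw [hW]
    exact row_sum hk1 hk2 μ hm1 hm2 ν1
  have hcol : ∀ ν2 : Fin k2, ∑ ν1 : Fin k1, W ν1 ν2 = 1 / k2 := by
    intro ν2
    have hswapinst : IsProbabilityMeasure (μ.map Prod.swap) :=
      Measure.isProbabilityMeasure_map measurable_swap.aemeasurable
    have hm1' : (μ.map Prod.swap).map Prod.fst = volume.restrict (Set.Icc (0:ℝ) 1) := by
      rw [Measure.map_map measurable_fst measurable_swap]; exact hm2
    have hm2' : (μ.map Prod.swap).map Prod.snd = volume.restrict (Set.Icc (0:ℝ) 1) := by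
      rw [Measure.map_map measurable_snd measurable_swap]; exact hm1
    have h := row_sum hk2 hk1 (μ.map Prod.swap) hm1' hm2' ν2
    rw [← h]
    refine Finset.sum_congr rfl fun ν1 _ => ?_
    rw [hW, Measure.map_apply measurable_swap (measurableSet_Ioc.prod measurableSet_Ioc),
      Set.preimage_swap_prod]
  have hbcont : Continuous fun p : ℝ × ℝ => b p.1 p.2 := by
    have : (fun p : ℝ × ℝ => b p.1 p.2) = fun p : ℝ × ℝ => ∑ ν1 : Fin k1, ∑ ν2 : Fin k2,
        W ν1 ν2 * betaDens k1 ((ν1 : ℕ) + 1) p.1 * betaDens k2 ((ν2 : ℕ) + 1) p.2 := by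
      funext p; exact hb p.1 p.2
    rw [this]
    apply continuous_finset_sum; intro i _
    apply continuous_finset_sum; intro j _
    exact (continuous_const.mul ((betaDens_continuous k1 _).comp continuous_fst)).mul
      ((betaDens_continuous k2 _).comp continuous_snd)
  have hfmeas : Measurable f := ENNReal.measurable_ofReal.comp hbcont.measurable
  have hprodμ : volume.restrict (I ×ˢ I) = μ1.prod μ1 := by
    rw [hμ1, Measure.prod_restrict, ← Measure.volume_eq_prod]
  have hinner1 : ∀ x ∈ I, ∫⁻ y, f (x, y) ∂μ1 = 1 := by
    intro x hx
    have h := lint_inner hk1 hk2 W hW0 hrow hx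
    rw [← h]
    exact lintegral_congr fun y => by rw [hf]; simp only; rw [hb]
  have hinner2 : ∀ y ∈ I, ∫⁻ x, f (x, y) ∂μ1 = 1 := by
    intro y hy
    have h := lint_inner hk2 hk1 (fun ν2 ν1 => W ν1 ν2) (fun ν2 ν1 => hW0 ν1 ν2) hcol hy
    rw [← h]
    refine lintegral_congr fun x => ?_
    rw [hf]; simp only; rw [hb]
    congr 1
    rw [Finset.sum_comm]
    exact Finset.sum_congr rfl fun ν2 _ => Finset.sum_congr rfl fun ν1 _ => by ring
  set ν' : Measure (ℝ × ℝ) := (volume.restrict (I ×ˢ I)).withDensity f with hν'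
  have hmap1 : ν'.map Prod.fst = μ1 := by
    ext s hs
    rw [Measure.map_apply measurable_fst hs, hν',
      withDensity_apply _ (hs.preimage measurable_fst), hprodμ,
      ← lintegral_indicator (hs.preimage measurable_fst) f,
      lintegral_prod _ ((hfmeas.indicator (hs.preimage measurable_fst)).aemeasurable)]
    have hpt : ∀ x, ∫⁻ y, (Prod.fst ⁻¹' s).indicator f (x, y) ∂μ1
        = s.indicator (fun x' => ∫⁻ y, f (x', y) ∂μ1) x := by
      intro x
      by_cases hxs : x ∈ s
      · rw [Set.indicator_of_mem hxs]
        exact lintegral_congr fun y => Set.indicator_of_mem (show (x, y) ∈ Prod.fst ⁻¹' s from hxs) f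
      · rw [Set.indicator_of_notMem hxs,
          show (fun y => (Prod.fst ⁻¹' s).indicator f (x, y)) = fun _ => 0 from
            funext fun y => Set.indicator_of_notMem (show (x, y) ∉ Prod.fst ⁻¹' s from hxs) f, lintegral_zero]
    simp_rw [hpt]
    have hcong : ∀ᵐ x ∂μ1, s.indicator (fun x' => ∫⁻ y, f (x', y) ∂μ1) x
        = s.indicator (fun _ => 1) x := by
      filter_upwards [ae_restrict_mem measurableSet_Icc] with x hxI
      by_cases hxs : x ∈ s
      · rw [Set.indicator_of_mem hxs, Set.indicator_of_mem hxs, hinner1 x hxI]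
      · rw [Set.indicator_of_notMem hxs, Set.indicator_of_notMem hxs]
    rw [lintegral_congr_ae hcong, lintegral_indicator hs, setLIntegral_one]
  have hmap2 : ν'.map Prod.snd = μ1 := by
    ext s hs
    rw [Measure.map_apply measurable_snd hs, hν',
      withDensity_apply _ (hs.preimage measurable_snd), hprodμ,
      ← lintegral_indicator (hs.preimage measurable_snd) f,
      lintegral_prod_symm _ ((hfmeas.indicator (hs.preimage measurable_snd)).aemeasurable)]
    have hpt : ∀ y, ∫⁻ x, (Prod.snd ⁻¹' s).indicator f (x, y) ∂μ1
        = s.indicator (fun y' => ∫⁻ x, f (x, y') ∂μ1) y := by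
      intro y
      by_cases hys : y ∈ s
      · rw [Set.indicator_of_mem hys]
        exact lintegral_congr fun x => Set.indicator_of_mem (show (x, y) ∈ Prod.snd ⁻¹' s from hys) f
      · rw [Set.indicator_of_notMem hys,
          show (fun x => (Prod.snd ⁻¹' s).indicator f (x, y)) = fun _ => 0 from
            funext fun x => Set.indicator_of_notMem (show (x, y) ∉ Prod.snd ⁻¹' s from hys) f, lintegral_zero]
    simp_rw [hpt]
    have hcong : ∀ᵐ y ∂μ1, s.indicator (fun y' => ∫⁻ x, f (x, y') ∂μ1) y
        = s.indicator (fun _ => 1) y := by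
      filter_upwards [ae_restrict_mem measurableSet_Icc] with y hyI
      by_cases hys : y ∈ s
      · rw [Set.indicator_of_mem hys, Set.indicator_of_mem hys, hinner2 y hyI]
      · rw [Set.indicator_of_notMem hys, Set.indicator_of_notMem hys]
    rw [lintegral_congr_ae hcong, lintegral_indicator hs, setLIntegral_one]
  have hprob : IsProbabilityMeasure ν' := by
    constructor
    have h := congrArg (fun m : Measure ℝ => m Set.univ) hmap1
    rw [Measure.map_apply measurable_fst MeasurableSet.univ, Set.preimage_univ] at h
    rw [h, hμ1, Measure.restrict_apply MeasurableSet.univ, Set.univ_inter, hI,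
      Real.volume_Icc]
    norm_num
  exact ⟨hprob, hmap1, hmap2⟩
end

section
/- Connectivity by rectangle exchanges: for any two k×k nonnegative matrices W and V with all row and column sums equal to 1/k, there exists a finite sequence of rectangle exchanges transforming W into V. -/
/-- One rectangle exchange step relating two `k × k` weight matrices. -/
def RectExchangeStep (k : ℕ) (W W' : Fin k → Fin k → ℝ) : Prop :=
  ∃ (a1 a2 b1 b2 : Fin k) (ε : ℝ), a1 ≠ a2 ∧ b1 ≠ b2 ∧
    max (-W a1 b2) (-W a2 b1) ≤ ε ∧ ε ≤ min (W a1 b1) (W a2 b2) ∧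
    ∀ i j, W' i j = W i j + ε *
      (((if i = a1 ∧ j = b2 then (1 : ℝ) else 0) + (if i = a2 ∧ j = b1 then 1 else 0))
        - ((if i = a1 ∧ j = b1 then 1 else 0) + (if i = a2 ∧ j = b2 then 1 else 0)))

namespace RectAux

variable {k : ℕ}

lemma step_nonneg {W W' : Fin k → Fin k → ℝ} (h : RectExchangeStep k W W')
    (hW : ∀ i j, 0 ≤ W i j) : ∀ i j, 0 ≤ W' i j := by
  obtain ⟨a1, a2, b1, b2, ε, ha, hb, hle, hge, hval⟩ := h
  have h1 : -W a1 b2 ≤ ε := le_trans (le_max_left _ _) hle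
  have h2 : -W a2 b1 ≤ ε := le_trans (le_max_right _ _) hle
  have h3 : ε ≤ W a1 b1 := le_trans hge (min_le_left _ _)
  have h4 : ε ≤ W a2 b2 := le_trans hge (min_le_right _ _)
  intro i j
  rw [hval i j]
  have := hW i j
  split_ifs <;> simp_all <;> linarith

lemma step_rowsum {W W' : Fin k → Fin k → ℝ} (h : RectExchangeStep k W W') (i : Fin k) :
    ∑ j, W' i j = ∑ j, W i j := by
  obtain ⟨a1, a2, b1, b2, ε, ha, hb, hle, hge, hval⟩ := h
  simp only [hval, Finset.sum_add_distrib, ← Finset.mul_sum, ite_and,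
    Finset.sum_sub_distrib, Finset.sum_ite_eq', Finset.mem_univ, if_true]
  split_ifs <;> simp [Finset.sum_ite_eq']

lemma step_colsum {W W' : Fin k → Fin k → ℝ} (h : RectExchangeStep k W W') (j : Fin k) :
    ∑ i, W' i j = ∑ i, W i j := by
  obtain ⟨a1, a2, b1, b2, ε, ha, hb, hle, hge, hval⟩ := h
  simp only [hval, Finset.sum_add_distrib, ← Finset.mul_sum, Finset.sum_sub_distrib]
  have e1 : ∀ (a : Fin k) (c : Prop) [Decidable c],
      ∑ i, (if i = a ∧ c then (1:ℝ) else 0) = if c then 1 else 0 := by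
    intro a c _
    simp [ite_and, Finset.sum_ite_eq', Finset.mem_univ]
  rw [e1, e1, e1, e1]
  split_ifs <;> simp

lemma step_symm {W W' : Fin k → Fin k → ℝ} (h : RectExchangeStep k W W')
    (hW : ∀ i j, 0 ≤ W i j) : RectExchangeStep k W' W := by
  obtain ⟨a1, a2, b1, b2, ε, ha, hb, hle, hge, hval⟩ := h
  have h1 : -W a1 b2 ≤ ε := le_trans (le_max_left _ _) hle
  have h2 : -W a2 b1 ≤ ε := le_trans (le_max_right _ _) hle
  have h3 : ε ≤ W a1 b1 := le_trans hge (min_le_left _ _)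
  have h4 : ε ≤ W a2 b2 := le_trans hge (min_le_right _ _)
  refine ⟨a1, a2, b1, b2, -ε, ha, hb, ?_, ?_, ?_⟩
  · have v1 : W' a1 b2 = W a1 b2 + ε := by
      rw [hval]; simp [ha, hb, ha.symm, hb.symm]
    have v2 : W' a2 b1 = W a2 b1 + ε := by
      rw [hval]; simp [ha, hb, ha.symm, hb.symm]
    rw [v1, v2]
    apply max_le <;> · have := hW a1 b2; have := hW a2 b1; linarith
  · have v3 : W' a1 b1 = W a1 b1 - ε := by
      rw [hval]; simp [ha, hb, ha.symm, hb.symm, sub_eq_add_neg]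
    have v4 : W' a2 b2 = W a2 b2 - ε := by
      rw [hval]; simp [ha, hb, ha.symm, hb.symm, sub_eq_add_neg]
    rw [v3, v4]
    apply le_min <;> · have := hW a1 b1; have := hW a2 b2; linarith
  · intro i j
    rw [hval i j]; ring

lemma rtg_nonneg {W V : Fin k → Fin k → ℝ}
    (h : Relation.ReflTransGen (RectExchangeStep k) W V)
    (hW : ∀ i j, 0 ≤ W i j) : ∀ i j, 0 ≤ V i j := by
  induction h with
  | refl => exact hW
  | tail _ hstep ih => exact step_nonneg hstep ih

lemma rtg_symm {W V : Fin k → Fin k → ℝ}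
    (h : Relation.ReflTransGen (RectExchangeStep k) W V)
    (hW : ∀ i j, 0 ≤ W i j) : Relation.ReflTransGen (RectExchangeStep k) V W := by
  induction h with
  | refl => exact .refl
  | tail h1 hstep ih =>
      exact Relation.ReflTransGen.head (step_symm hstep (rtg_nonneg h1 hW)) (ih)

/-- One diagonal stage: make `W d d = 1/k` by rectangle exchanges, preserving the
already-fixed region. -/
lemma stage (k : ℕ) (d : Fin k) :
    ∀ (n : ℕ) (W : Fin k → Fin k → ℝ),
      (∀ i j, 0 ≤ W i j) →
      (∀ i, ∑ j, W i j = 1 / (k:ℝ)) → (∀ j, ∑ i, W i j = 1 / (k:ℝ)) →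
      (∀ i j : Fin k, (i.val < d.val ∨ j.val < d.val) →
        W i j = if i = j then 1/(k:ℝ) else 0) →
      ((Finset.univ.filter fun b => b ≠ d ∧ 0 < W d b).card
        + (Finset.univ.filter fun a => a ≠ d ∧ 0 < W a d).card ≤ n) →
      ∃ W', Relation.ReflTransGen (RectExchangeStep k) W W' ∧
        (∀ i j, 0 ≤ W' i j) ∧
        (∀ i, ∑ j, W' i j = 1 / (k:ℝ)) ∧ (∀ j, ∑ i, W' i j = 1 / (k:ℝ)) ∧
        (∀ i j : Fin k, (i.val < d.val ∨ j.val < d.val) →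
          W' i j = if i = j then 1/(k:ℝ) else 0) ∧
        W' d d = 1/(k:ℝ) := by
  intro n
  induction n with
  | zero =>
      intro W hpos hrow hcol hfix hcard
      by_cases hdd : W d d = 1/(k:ℝ)
      · exact ⟨W, .refl, hpos, hrow, hcol, hfix, hdd⟩
      · exfalso
        -- find b2 with positive mass elsewhere in row d
        have hb2 : ∃ b2, b2 ≠ d ∧ 0 < W d b2 := by
          by_contra hc
          push_neg at hc
          have hz : ∀ b ∈ Finset.univ, b ≠ d → W d b = 0 := fun b _ hbd =>
            le_antisymm (hc b hbd) (hpos d b)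
          have := Finset.sum_eq_single d (fun b hb hbd => hz b hb hbd) (by simp)
          rw [hrow d] at this
          exact hdd this.symm
        obtain ⟨b2, hb2d, hb2pos⟩ := hb2
        have : b2 ∈ Finset.univ.filter fun b => b ≠ d ∧ 0 < W d b := by
          simp [hb2d, hb2pos]
        have := Finset.card_pos.mpr ⟨b2, this⟩
        omega
  | succ n ih =>
      intro W hpos hrow hcol hfix hcard
      by_cases hdd : W d d = 1/(k:ℝ)
      · exact ⟨W, .refl, hpos, hrow, hcol, hfix, hdd⟩
      -- find b2, a2
      have hb2 : ∃ b2, b2 ≠ d ∧ 0 < W d b2 := by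
        by_contra hc
        push_neg at hc
        have hz : ∀ b ∈ Finset.univ, b ≠ d → W d b = 0 := fun b _ hbd =>
          le_antisymm (hc b hbd) (hpos d b)
        have := Finset.sum_eq_single d (fun b hb hbd => hz b hb hbd) (by simp)
        rw [hrow d] at this
        exact hdd this.symm
      have ha2 : ∃ a2, a2 ≠ d ∧ 0 < W a2 d := by
        by_contra hc
        push_neg at hc
        have hz : ∀ a ∈ Finset.univ, a ≠ d → W a d = 0 := fun a _ had =>
          le_antisymm (hc a had) (hpos a d)
        have := Finset.sum_eq_single d (fun a hb had => hz a hb had) (by simp)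
        rw [hcol d] at this
        exact hdd this.symm
      obtain ⟨b2, hb2d, hb2pos⟩ := hb2
      obtain ⟨a2, ha2d, ha2pos⟩ := ha2
      -- b2, a2 are not in the fixed region
      have hb2ge : ¬ (b2.val < d.val) := by
        intro h
        have := hfix d b2 (Or.inr h)
        rw [if_neg (fun he => hb2d (he.symm))] at this
        linarith
      have ha2ge : ¬ (a2.val < d.val) := by
        intro h
        have := hfix a2 d (Or.inl h)
        rw [if_neg (fun he => ha2d he)] at this
        linarith
      set ε : ℝ := -(min (W d b2) (W a2 d)) with hεdef
      have hminpos : 0 < min (W d b2) (W a2 d) := lt_min hb2pos ha2pos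
      set W' : Fin k → Fin k → ℝ := fun i j => W i j + ε *
        (((if i = d ∧ j = b2 then (1 : ℝ) else 0) + (if i = a2 ∧ j = d then 1 else 0))
          - ((if i = d ∧ j = d then 1 else 0) + (if i = a2 ∧ j = b2 then 1 else 0)))
        with hW'def
      have hstep : RectExchangeStep k W W' := by
        refine ⟨d, a2, d, b2, ε, fun h => ha2d h.symm, fun h => hb2d h.symm, ?_, ?_,
          fun i j => rfl⟩
        · rw [max_neg_neg]
        · apply le_min <;> · have := hpos d d; have := hpos a2 b2; linarith
      have hunch : ∀ i j, ¬(i = d ∧ j = d) → ¬(i = d ∧ j = b2) → ¬(i = a2 ∧ j = d) →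
          ¬(i = a2 ∧ j = b2) → W' i j = W i j := by
        intro i j h1 h2 h3 h4
        simp only [hW'def, if_neg h1, if_neg h2, if_neg h3, if_neg h4]
        ring
      have hv1 : W' d b2 = W d b2 + ε := by
        simp only [hW'def]
        simp [Ne.symm ha2d, hb2d]
      have hv2 : W' a2 d = W a2 d + ε := by
        simp only [hW'def]
        simp [ha2d, Ne.symm hb2d]
      have hpos' := step_nonneg hstep hpos
      have hrow' : ∀ i, ∑ j, W' i j = 1 / (k:ℝ) := fun i => by
        rw [step_rowsum hstep]; exact hrow i
      have hcol' : ∀ j, ∑ i, W' i j = 1 / (k:ℝ) := fun j => by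
        rw [step_colsum hstep]; exact hcol j
      have hfix' : ∀ i j : Fin k, (i.val < d.val ∨ j.val < d.val) →
          W' i j = if i = j then 1/(k:ℝ) else 0 := by
        intro i j hij
        have h1 : ¬(i = d ∧ j = d) := by
          rintro ⟨e1, e2⟩
          rcases hij with h | h
          · subst e1; exact lt_irrefl _ h
          · subst e2; exact lt_irrefl _ h
        have h2 : ¬(i = d ∧ j = b2) := by
          rintro ⟨e1, e2⟩
          rcases hij with h | h
          · subst e1; exact lt_irrefl _ h
          · subst e2; exact hb2ge h
        have h3 : ¬(i = a2 ∧ j = d) := by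
          rintro ⟨e1, e2⟩
          rcases hij with h | h
          · subst e1; exact ha2ge h
          · subst e2; exact lt_irrefl _ h
        have h4 : ¬(i = a2 ∧ j = b2) := by
          rintro ⟨e1, e2⟩
          rcases hij with h | h
          · subst e1; exact ha2ge h
          · subst e2; exact hb2ge h
        rw [hunch i j h1 h2 h3 h4]
        exact hfix i j hij
      -- measure decreases
      have hsub1 : (Finset.univ.filter fun b => b ≠ d ∧ 0 < W' d b) ⊆
          (Finset.univ.filter fun b => b ≠ d ∧ 0 < W d b) := by
        intro b hb
        simp only [Finset.mem_filter, Finset.mem_univ, true_and] at hb ⊢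
        refine ⟨hb.1, ?_⟩
        by_cases hbb2 : b = b2
        · subst hbb2; exact hb2pos
        · have := hunch d b (fun h => hb.1 h.2) (fun h => hbb2 h.2)
            (fun h => ha2d h.1.symm) (fun h => ha2d h.1.symm)
          rw [this] at hb
          exact hb.2
      have hsub2 : (Finset.univ.filter fun a => a ≠ d ∧ 0 < W' a d) ⊆
          (Finset.univ.filter fun a => a ≠ d ∧ 0 < W a d) := by
        intro a ha
        simp only [Finset.mem_filter, Finset.mem_univ, true_and] at ha ⊢
        refine ⟨ha.1, ?_⟩
        by_cases haa2 : a = a2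
        · subst haa2; exact ha2pos
        · have := hunch a d (fun h => ha.1 h.1) (fun h => hb2d h.2.symm)
            (fun h => haa2 h.1) (fun h => haa2 h.1)
          rw [this] at ha
          exact ha.2
      have hdec : (Finset.univ.filter fun b => b ≠ d ∧ 0 < W' d b).card
          + (Finset.univ.filter fun a => a ≠ d ∧ 0 < W' a d).card ≤ n := by
        rcases le_total (W d b2) (W a2 d) with hmin | hmin
        · have hz : W' d b2 = 0 := by
            rw [hv1, hεdef, min_eq_left hmin]; ring
          have hb2in : b2 ∈ Finset.univ.filter fun b => b ≠ d ∧ 0 < W d b := by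
            simp [hb2d, hb2pos]
          have hb2out : b2 ∉ Finset.univ.filter fun b => b ≠ d ∧ 0 < W' d b := by
            simp [hz]
          have hlt : (Finset.univ.filter fun b => b ≠ d ∧ 0 < W' d b).card
              < (Finset.univ.filter fun b => b ≠ d ∧ 0 < W d b).card :=
            Finset.card_lt_card ⟨hsub1, fun hs => hb2out (hs hb2in)⟩
          have := Finset.card_le_card hsub2
          omega
        · have hz : W' a2 d = 0 := by
            rw [hv2, hεdef, min_eq_right hmin]; ring
          have ha2in : a2 ∈ Finset.univ.filter fun a => a ≠ d ∧ 0 < W a d := by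
            simp [ha2d, ha2pos]
          have ha2out : a2 ∉ Finset.univ.filter fun a => a ≠ d ∧ 0 < W' a d := by
            simp [hz]
          have hlt : (Finset.univ.filter fun a => a ≠ d ∧ 0 < W' a d).card
              < (Finset.univ.filter fun a => a ≠ d ∧ 0 < W a d).card :=
            Finset.card_lt_card ⟨hsub2, fun hs => ha2out (hs ha2in)⟩
          have := Finset.card_le_card hsub1
          omega
      obtain ⟨W'', hrtg, hp, hr, hc, hf, hd⟩ := ih W' hpos' hrow' hcol' hfix' hdec
      exact ⟨W'', Relation.ReflTransGen.head hstep hrtg, hp, hr, hc, hf, hd⟩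

lemma row_rest_zero {W : Fin k → Fin k → ℝ} (hpos : ∀ i j, 0 ≤ W i j)
    (d : Fin k) (hsum : ∑ j, W d j = 1/(k:ℝ)) (hdd : W d d = 1/(k:ℝ)) :
    ∀ j, j ≠ d → W d j = 0 := by
  intro j hj
  have h := Finset.add_sum_erase Finset.univ (W d) (Finset.mem_univ d)
  rw [hsum, hdd] at h
  have h1 : ∑ x ∈ Finset.univ.erase d, W d x = 0 := by linarith
  exact (Finset.sum_eq_zero_iff_of_nonneg (fun x _ => hpos d x)).mp h1 j
    (Finset.mem_erase.mpr ⟨hj, Finset.mem_univ j⟩)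

lemma col_rest_zero {W : Fin k → Fin k → ℝ} (hpos : ∀ i j, 0 ≤ W i j)
    (d : Fin k) (hsum : ∑ i, W i d = 1/(k:ℝ)) (hdd : W d d = 1/(k:ℝ)) :
    ∀ i, i ≠ d → W i d = 0 := by
  intro i hi
  have h := Finset.add_sum_erase Finset.univ (fun x => W x d) (Finset.mem_univ d)
  rw [hsum, hdd] at h
  have h1 : ∑ x ∈ Finset.univ.erase d, W x d = 0 := by linarith
  exact (Finset.sum_eq_zero_iff_of_nonneg (fun x _ => hpos x d)).mp h1 i
    (Finset.mem_erase.mpr ⟨hi, Finset.mem_univ i⟩)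

lemma stages (k : ℕ) :
    ∀ (m d : ℕ), k ≤ d + m → ∀ W : Fin k → Fin k → ℝ,
      (∀ i j, 0 ≤ W i j) →
      (∀ i, ∑ j, W i j = 1 / (k:ℝ)) → (∀ j, ∑ i, W i j = 1 / (k:ℝ)) →
      (∀ i j : Fin k, (i.val < d ∨ j.val < d) → W i j = if i = j then 1/(k:ℝ) else 0) →
      Relation.ReflTransGen (RectExchangeStep k) W
        (fun i j => if i = j then 1/(k:ℝ) else 0) := by
  intro m
  induction m with
  | zero =>
      intro d hd W hpos hrow hcol hfix
      have hWE : W = fun i j => if i = j then 1/(k:ℝ) else 0 := by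
        funext i j
        exact hfix i j (Or.inl (by omega))
      rw [hWE]
  | succ m ih =>
      intro d hd W hpos hrow hcol hfix
      by_cases hdk : k ≤ d
      · exact ih d (by omega) W hpos hrow hcol hfix
      · push_neg at hdk
        obtain ⟨W', hrtg, hpos', hrow', hcol', hfix', hdd⟩ :=
          stage k ⟨d, hdk⟩ ((Finset.univ.filter fun b => b ≠ (⟨d, hdk⟩ : Fin k) ∧
              0 < W ⟨d, hdk⟩ b).card
            + (Finset.univ.filter fun a => a ≠ (⟨d, hdk⟩ : Fin k) ∧
              0 < W a ⟨d, hdk⟩).card) W hpos hrow hcol hfix le_rfl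
        have hfix1 : ∀ i j : Fin k, (i.val < d + 1 ∨ j.val < d + 1) →
            W' i j = if i = j then 1/(k:ℝ) else 0 := by
          intro i j hij
          by_cases hold : i.val < d ∨ j.val < d
          · exact hfix' i j hold
          · push_neg at hold
            rcases hij with h | h
            · have hi : i = ⟨d, hdk⟩ := Fin.ext (by simp only [Fin.val_mk]; omega)
              subst hi
              by_cases hji : j = (⟨d, hdk⟩ : Fin k)
              · subst hji; rw [if_pos rfl]; exact hdd
              · rw [if_neg (fun he => hji he.symm)]
                exact row_rest_zero hpos' _ (hrow' _) hdd j hji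
            · have hj : j = ⟨d, hdk⟩ := Fin.ext (by simp only [Fin.val_mk]; omega)
              subst hj
              by_cases hij' : i = (⟨d, hdk⟩ : Fin k)
              · subst hij'; rw [if_pos rfl]; exact hdd
              · rw [if_neg hij']
                exact col_rest_zero hpos' _ (hcol' _) hdd i hij'
        exact hrtg.trans (ih (d + 1) (by omega) W' hpos' hrow' hcol' hfix1)

end RectAux

/-- any two grid-uniform copula weight matrices are connected by a
finite sequence of rectangle exchanges. -/
theorem rectangle_exchange_connectivity (k : ℕ) (hk : 0 < k)
    (W V : Fin k → Fin k → ℝ)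
    (hWpos : ∀ i j, 0 ≤ W i j) (hVpos : ∀ i j, 0 ≤ V i j)
    (hWrow : ∀ i, ∑ j, W i j = 1 / k) (hWcol : ∀ j, ∑ i, W i j = 1 / k)
    (hVrow : ∀ i, ∑ j, V i j = 1 / k) (hVcol : ∀ j, ∑ i, V i j = 1 / k) :
    Relation.ReflTransGen (RectExchangeStep k) W V := by
  have hWE := RectAux.stages k k 0 (by omega) W hWpos hWrow hWcol
    (by intro i j h; rcases h with h | h <;> omega)
  have hVE := RectAux.stages k k 0 (by omega) V hVpos hVrow hVcol
    (by intro i j h; rcases h with h | h <;> omega)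
  exact hWE.trans (RectAux.rtg_symm hVE hVpos)
end

section
/- If G is the CDF of a probability measure μ on [0,1]^d with G(z) = 0 whenever some coordinate of z is 0, then the Bernstein polynomial B_{k,G} equals the CDF of the absolutely continuous measure with density b_{k,G}(z) = Σ_{ν∈∏_j{1,...,kj}} W_ν ∏_j β(z_j; ν_j, k_j−ν_j+1), where W_ν = μ(∏_j ((ν_j−1)/k_j, ν_j/k_j]); in particular B_{k,G} is absolutely continuous with respect to Lebesgue measure. -/
open MeasureTheory

lemma hA (k i : ℕ) (hi : 1 ≤ i) : k * (k-1).choose (i-1) = k.choose i * i := by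
  cases k with
  | zero => simp [Nat.choose_eq_zero_of_lt hi]
  | succ m =>
    obtain ⟨j, rfl⟩ := Nat.exists_eq_add_of_le hi
    simpa [Nat.succ_sub_one, Nat.add_comm] using Nat.add_one_mul_choose_eq m j

lemma hB (k i : ℕ) (hk : 1 ≤ k) : k * (k-1).choose i = k.choose i * (k - i) := by
  obtain ⟨m, rfl⟩ := Nat.exists_eq_add_of_le hk
  rw [← Nat.choose_succ_right_eq]
  simpa [Nat.add_comm] using (Nat.add_one_mul_choose_eq m i)

lemma telescope (k m : ℕ) (hm : m < k) (f : ℕ → ℝ) :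
    ∑ i ∈ Finset.Ioc m k, (f (i-1) - f i) = f m - f k := by
  have h : Finset.Ioc m k = Finset.Ico (m+1) (k+1) := by ext i; simp [Nat.lt_succ_iff]
  rw [h, Finset.sum_Ico_eq_sum_range]
  have : ∀ i, f (m + 1 + i - 1) - f (m + 1 + i) = (fun j => f (m + j)) i - (fun j => f (m + j)) (i+1) := by
    intro i; congr 2 <;> omega
  rw [Finset.sum_congr rfl (fun i _ => this i), Finset.sum_range_sub']
  congr 2
  omega

lemma derivG (k i : ℕ) (hi : 1 ≤ i) (hik : i ≤ k) (y : ℝ) :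
    HasDerivAt (fun t : ℝ => (k.choose i : ℝ) * (t ^ i * (1 - t) ^ (k - i)))
      ((fun j => (k:ℝ) * ((k-1).choose j : ℝ) * y^j * (1-y)^(k-1-j)) (i-1)
       - (fun j => (k:ℝ) * ((k-1).choose j : ℝ) * y^j * (1-y)^(k-1-j)) i) y := by
  have h1 : HasDerivAt (fun t : ℝ => t ^ i) (i * y ^ (i-1)) y := hasDerivAt_pow i y
  have h2 : HasDerivAt (fun t : ℝ => (1 - t) ^ (k - i))
      (((k - i : ℕ) : ℝ) * (1 - y) ^ (k - i - 1) * (-1)) y := by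
    have := (hasDerivAt_pow (k - i) (1 - y)).comp y
      ((hasDerivAt_const y (1:ℝ)).sub (hasDerivAt_id y))
    simpa [Function.comp_def] using this
  have h := ((h1.mul h2).const_mul ((k.choose i : ℝ)))
  refine h.congr_deriv (Eq.symm ?_)
  have e1 : k - 1 - (i - 1) = k - i := by omega
  have e2 : k - i - 1 = k - 1 - i := by omega
  have c1 : ((k : ℝ)) * ((k-1).choose (i-1) : ℝ) = (k.choose i : ℝ) * i := by
    exact_mod_cast congrArg (Nat.cast : ℕ → ℝ) (hA k i hi)
  have c2 : ((k : ℝ)) * ((k-1).choose i : ℝ) = (k.choose i : ℝ) * ((k - i : ℕ) : ℝ) := by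
    exact_mod_cast congrArg (Nat.cast : ℕ → ℝ) (hB k i (le_trans hi hik))
  simp only [e1, ← e2]
  rw [mul_assoc ((k:ℝ)) _ (y ^ (i-1)), mul_assoc ((k:ℝ)) _ (y ^ i), ← mul_assoc, ← mul_assoc, c1, c2]
  ring

lemma key1 (k m : ℕ) (hm : m < k) (z : ℝ) (hz : 0 ≤ z) :
    ∫ t in Set.Icc (0:ℝ) z, betaDens k (m+1) t
      = ∑ i : Fin (k+1), if m < (i:ℕ) then (k.choose i : ℝ) * z^(i:ℕ) * (1-z)^(k-(i:ℕ)) else 0 := by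
  set f : ℕ → ℝ → ℝ := fun j y => (k:ℝ) * ((k-1).choose j : ℝ) * y^j * (1-y)^(k-1-j) with hf
  set F : ℝ → ℝ := fun y => ∑ i : Fin (k+1), if m < (i:ℕ) then (k.choose i : ℝ) * (y^(i:ℕ) * (1-y)^(k-(i:ℕ))) else 0 with hF
  have hFd : ∀ y, HasDerivAt F (betaDens k (m+1) y) y := by
    intro y
    have hsum : HasDerivAt F
        (∑ i : Fin (k+1), if m < (i:ℕ) then f ((i:ℕ)-1) y - f (i:ℕ) y else 0) y := by
      apply HasDerivAt.fun_sum
      intro i _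
      by_cases h : m < (i:ℕ)
      · simp only [if_pos h]
        exact derivG k i (by omega) (by omega : (i:ℕ) ≤ k) y
      · simp only [if_neg h]
        exact hasDerivAt_const y 0
    convert hsum using 1
    have : (∑ i : Fin (k+1), if m < (i:ℕ) then f ((i:ℕ)-1) y - f (i:ℕ) y else 0)
        = ∑ i ∈ Finset.Ioc m k, (f (i-1) y - f i y) := by
      rw [Fin.sum_univ_eq_sum_range (fun i => if m < i then f (i-1) y - f i y else 0)]
      rw [← Finset.sum_filter]
      congr 1
      ext i
      simp [Nat.lt_succ_iff]
      omega
    rw [this, telescope k m hm (fun j => f j y)]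
    have : f k y = 0 := by
      simp [hf, Nat.choose_eq_zero_of_lt (by omega : k - 1 < k)]
    rw [this, sub_zero]
    have e : k - (m+1) = k - 1 - m := by omega
    simp [betaDens, hf, e]
  have hF0 : F 0 = 0 := by
    simp only [hF]
    apply Finset.sum_eq_zero
    intro i _
    by_cases h : m < (i:ℕ)
    · simp [if_pos h, zero_pow (by omega : (i:ℕ) ≠ 0)]
    · simp [if_neg h]
  have hcont : Continuous (betaDens k (m+1)) := by
    unfold betaDens; fun_prop
  rw [MeasureTheory.integral_Icc_eq_integral_Ioc, ← intervalIntegral.integral_of_le hz]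
  rw [intervalIntegral.integral_eq_sub_of_hasDerivAt (fun t _ => hFd t) (hcont.intervalIntegrable _ _)]
  rw [hF0, sub_zero]
  simp [hF, mul_assoc]

lemma cell_measurable (d : ℕ) (k : Fin d → ℕ) (a b : Fin d → ℝ) :
    MeasurableSet {x : Fin d → ℝ | ∀ j, a j < x j ∧ x j ≤ b j} := by
  have : {x : Fin d → ℝ | ∀ j, a j < x j ∧ x j ≤ b j}
      = ⋂ j, (fun x : Fin d → ℝ => x j) ⁻¹' (Set.Ioc (a j) (b j)) := by
    ext x; simp [Set.mem_iInter, Set.mem_Ioc]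
  rw [this]
  exact MeasurableSet.iInter fun j => (measurable_pi_apply j) measurableSet_Ioc

lemma le_measurable (d : ℕ) (c : Fin d → ℝ) :
    MeasurableSet {x : Fin d → ℝ | ∀ j, x j ≤ c j} := by
  have : {x : Fin d → ℝ | ∀ j, x j ≤ c j}
      = ⋂ j, (fun x : Fin d → ℝ => x j) ⁻¹' (Set.Iic (c j)) := by
    ext x; simp [Set.mem_iInter]
  rw [this]
  exact MeasurableSet.iInter fun j => (measurable_pi_apply j) measurableSet_Iic

lemma stepA (d : ℕ) (μ : Measure (Fin d → ℝ))
    (hG0' : ∀ c : Fin d → ℝ, (∃ j, c j = 0) → μ {x | ∀ j, x j ≤ c j} = 0)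
    (k : Fin d → ℕ) (hk : ∀ j, 0 < k j) (ν : ∀ j, Fin (k j + 1)) :
    μ {x | ∀ j, x j ≤ (ν j : ℝ) / (k j : ℝ)}
      = ∑ η : (∀ j, Fin (k j)),
          if (∀ j, (η j : ℕ) < (ν j : ℕ)) then
            μ {x : Fin d → ℝ | ∀ j,
              (η j : ℝ) / (k j : ℝ) < x j ∧ x j ≤ (((η j : ℕ) + 1 : ℕ) : ℝ) / (k j : ℝ)}
          else 0 := by
  set c : Fin d → ℝ := fun j => (ν j : ℝ) / (k j : ℝ) with hc
  have hc0 : ∀ j, 0 ≤ c j := fun j => div_nonneg (Nat.cast_nonneg _) (Nat.cast_nonneg _)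
  have hkpos : ∀ j, (0:ℝ) < (k j : ℝ) := fun j => by exact_mod_cast hk j
  set cell : (∀ j, Fin (k j)) → Set (Fin d → ℝ) := fun η =>
    {x : Fin d → ℝ | ∀ j,
      (η j : ℝ) / (k j : ℝ) < x j ∧ x j ≤ (((η j : ℕ) + 1 : ℕ) : ℝ) / (k j : ℝ)} with hcell
  set A : Set (Fin d → ℝ) := {x | ∀ j, 0 < x j ∧ x j ≤ c j} with hA
  set B : Set (Fin d → ℝ) := {x | ∀ j, x j ≤ c j} with hB
  -- μ B = μ A
  have hBA : μ B = μ A := by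
    have hsub : A ⊆ B := fun x hx j => (hx j).2
    have hdiff : B \ A ⊆ ⋃ i, {x : Fin d → ℝ | ∀ j, x j ≤ Function.update c i 0 j} := by
      rintro x ⟨hxB, hxA⟩
      simp only [hA, Set.mem_setOf_eq, not_forall] at hxA
      obtain ⟨i, hi⟩ := hxA
      have hxi : x i ≤ 0 := by
        by_contra h
        exact hi ⟨lt_of_not_ge h, hxB i⟩
      refine Set.mem_iUnion.mpr ⟨i, fun j => ?_⟩
      rcases eq_or_ne j i with rfl | hji
      · simp [hxi]
      · simp [Function.update_apply, hji, hxB j]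
    have h0 : μ (B \ A) = 0 := by
      refine measure_mono_null hdiff (measure_iUnion_null fun i => ?_)
      exact hG0' _ ⟨i, by simp⟩
    have : μ B ≤ μ A := by
      calc μ B ≤ μ (A ∪ B \ A) := measure_mono (by intro x hx; by_cases h : x ∈ A <;> simp [h, hx])
        _ ≤ μ A + μ (B \ A) := measure_union_le _ _
        _ = μ A := by rw [h0, add_zero]
    exact le_antisymm this (measure_mono hsub)
  -- A = union of cells
  have hAcells : A = ⋃ η ∈ Finset.univ.filter (fun η : ∀ j, Fin (k j) => ∀ j, (η j : ℕ) < (ν j : ℕ)), cell η := by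
    ext x
    simp only [Set.mem_iUnion, Finset.mem_filter, Finset.mem_univ, true_and]
    constructor
    · intro hx
      have hgood : ∀ j, ∃ m : ℕ, m < k j ∧ m < (ν j : ℕ) ∧
          (m : ℝ) / (k j : ℝ) < x j ∧ x j ≤ ((m + 1 : ℕ) : ℝ) / (k j : ℝ) := by
        intro j
        have hx1 : 0 < x j := (hx j).1
        have hx2 : x j ≤ c j := (hx j).2
        set t : ℝ := x j * (k j : ℝ) with ht
        have ht0 : 0 < t := mul_pos hx1 (hkpos j)
        have htν : t ≤ (ν j : ℕ) := by
          rw [ht]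
          rw [hc] at hx2
          calc x j * (k j : ℝ) ≤ ((ν j : ℕ) : ℝ) / (k j : ℝ) * (k j : ℝ) := by
                apply mul_le_mul_of_nonneg_right _ (le_of_lt (hkpos j))
                exact_mod_cast hx2
            _ = ((ν j : ℕ) : ℝ) := by
                rw [div_mul_eq_mul_div, mul_div_assoc, div_self (ne_of_gt (hkpos j)), mul_one]
        have hceil1 : 1 ≤ ⌈t⌉₊ := Nat.one_le_ceil_iff.mpr ht0
        have hceilν : ⌈t⌉₊ ≤ (ν j : ℕ) := Nat.ceil_le.mpr htν
        refine ⟨⌈t⌉₊ - 1, by omega, by omega, ?_, ?_⟩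
        · have : (⌈t⌉₊ : ℝ) - 1 < t := by
            have := Nat.ceil_lt_add_one (le_of_lt ht0) (R := ℝ)
            linarith
          have h2 : ((⌈t⌉₊ - 1 : ℕ) : ℝ) < t := by
            rw [Nat.cast_sub hceil1]; simpa using this
          rw [div_lt_iff₀ (hkpos j)]
          exact h2
        · have h3 : t ≤ (⌈t⌉₊ : ℝ) := Nat.le_ceil t
          have h4 : (⌈t⌉₊ - 1 + 1 : ℕ) = ⌈t⌉₊ := by omega
          rw [h4, le_div_iff₀ (hkpos j)]
          exact h3
      choose m hm1 hm2 hm3 hm4 using hgood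
      exact ⟨fun j => ⟨m j, hm1 j⟩, fun j => hm2 j, fun j => ⟨hm3 j, hm4 j⟩⟩
    · rintro ⟨η, hην, hx⟩ j
      have h1 := (hx j).1
      have h2 := (hx j).2
      constructor
      · calc (0:ℝ) ≤ (η j : ℝ) / (k j : ℝ) := div_nonneg (by positivity) (le_of_lt (hkpos j))
          _ < x j := h1
      · calc x j ≤ (((η j : ℕ) + 1 : ℕ) : ℝ) / (k j : ℝ) := h2
          _ ≤ ((ν j : ℕ) : ℝ) / (k j : ℝ) := by
              gcongr
              exact_mod_cast Nat.succ_le_of_lt (hην j)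
          _ = c j := rfl
  rw [hBA, hAcells]
  have hdisj : Set.PairwiseDisjoint
      (↑(Finset.univ.filter (fun η : ∀ j, Fin (k j) => ∀ j, (η j : ℕ) < (ν j : ℕ)))) cell := by
    intro p hp q hq hne
    refine Set.disjoint_left.mpr fun x hxp hxq => ?_
    have hex : ∃ j, (p j : ℕ) ≠ (q j : ℕ) := by
      by_contra h
      push_neg at h
      exact hne (funext fun j => Fin.ext (h j))
    obtain ⟨j, hj⟩ := hex
    have main : ∀ (a b : ∀ j, Fin (k j)), x ∈ cell a → x ∈ cell b → (a j : ℕ) < (b j : ℕ) → False := by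
      intro a b ha hb hlt
      have h1 := (ha j).2
      have h2 := (hb j).1
      have h3 : (((a j : ℕ) + 1 : ℕ) : ℝ) / (k j : ℝ) ≤ ((b j : ℕ) : ℝ) / (k j : ℝ) := by
        gcongr
        exact_mod_cast Nat.succ_le_of_lt hlt
      linarith
    rcases Nat.lt_or_ge (p j : ℕ) (q j : ℕ) with h | h
    · exact main p q hxp hxq h
    · exact main q p hxq hxp (lt_of_le_of_ne h (Ne.symm hj))
  rw [measure_biUnion_finset hdisj (fun b _ => cell_measurable d k _ _)]
  rw [Finset.sum_filter]

lemma swap_factor (d : ℕ) (k : Fin d → ℕ) (W : (∀ j, Fin (k j)) → ℝ)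
    (c : (j : Fin d) → Fin (k j + 1) → ℝ) :
    ∑ ν : (∀ j, Fin (k j + 1)),
        (∑ η : (∀ j, Fin (k j)), if (∀ j, (η j : ℕ) < (ν j : ℕ)) then W η else 0) * ∏ j, c j (ν j)
      = ∑ η : (∀ j, Fin (k j)),
          W η * ∏ j, (∑ i : Fin (k j + 1), if (η j : ℕ) < (i : ℕ) then c j i else 0) := by
  simp_rw [Finset.sum_mul]
  rw [Finset.sum_comm]
  refine Finset.sum_congr rfl fun η _ => ?_
  have step : ∀ ν : (∀ j, Fin (k j + 1)),
      (if (∀ j, (η j : ℕ) < (ν j : ℕ)) then W η else 0) * ∏ j, c j (ν j)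
        = W η * ∏ j, (if (η j : ℕ) < (ν j : ℕ) then c j (ν j) else 0) := by
    intro ν
    by_cases h : ∀ j, (η j : ℕ) < (ν j : ℕ)
    · rw [if_pos h]
      congr 1
      exact Finset.prod_congr rfl fun j _ => (if_pos (h j)).symm
    · rw [if_neg h, zero_mul]
      push_neg at h
      obtain ⟨j, hj⟩ := h
      have hz : (∏ j, if (η j : ℕ) < (ν j : ℕ) then c j (ν j) else 0) = 0 :=
        Finset.prod_eq_zero (Finset.mem_univ j) (if_neg (by omega))
      rw [hz, mul_zero]
  rw [Finset.sum_congr rfl fun ν _ => step ν, ← Finset.mul_sum]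
  congr 1
  rw [← Fintype.piFinset_univ]
  exact (Finset.prod_univ_sum (fun j : Fin d => (Finset.univ : Finset (Fin (k j + 1))))
    (fun j i => if (η j : ℕ) < (i : ℕ) then c j i else 0)).symm

lemma box_integral (d : ℕ) (z : Fin d → ℝ) (f : (j : Fin d) → ℝ → ℝ)
    (hf : ∀ j, Continuous (f j)) :
    ∫ x in Set.Icc (0 : Fin d → ℝ) z, ∏ j, f j (x j)
      = ∏ j, ∫ t in Set.Icc (0 : ℝ) (z j), f j t := by
  have hIcc : Set.Icc (0 : Fin d → ℝ) z = Set.pi Set.univ fun j => Set.Icc (0 : ℝ) (z j) := by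
    rw [← Set.pi_univ_Icc]; rfl
  have hmeas : MeasurableSet (Set.pi Set.univ fun j => Set.Icc (0 : ℝ) (z j)) :=
    MeasurableSet.univ_pi fun j => measurableSet_Icc
  rw [hIcc, ← integral_indicator hmeas]
  have hind : ∀ x : Fin d → ℝ,
      (Set.pi Set.univ fun j => Set.Icc (0 : ℝ) (z j)).indicator (fun x => ∏ j, f j (x j)) x
        = ∏ j, (Set.Icc (0 : ℝ) (z j)).indicator (f j) (x j) := by
    intro x
    by_cases hx : x ∈ Set.pi Set.univ fun j => Set.Icc (0 : ℝ) (z j)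
    · rw [Set.indicator_of_mem hx]
      exact Finset.prod_congr rfl fun j _ =>
        (Set.indicator_of_mem (hx j (Set.mem_univ j)) _).symm
    · rw [Set.indicator_of_notMem hx]
      have : ∃ j, x j ∉ Set.Icc (0 : ℝ) (z j) := by
        by_contra h
        push_neg at h
        exact hx fun j _ => h j
      obtain ⟨j, hj⟩ := this
      exact (Finset.prod_eq_zero (Finset.mem_univ j) (Set.indicator_of_notMem hj _)).symm
  simp_rw [hind]
  rw [MeasureTheory.integral_fintype_prod_volume_eq_prod
    (f := fun j t => (Set.Icc (0 : ℝ) (z j)).indicator (f j) t)]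
  exact Finset.prod_congr rfl fun j _ => integral_indicator measurableSet_Icc



/-- if G is the CDF of a probability measure μ on [0,1]^d vanishing
whenever some coordinate is 0, then the Bernstein polynomial B_{k,G} is the CDF of
the absolutely continuous measure with the Bernstein copula density built from the
grid-cell masses of μ. -/
theorem bernstein_cdf_of_density (d : ℕ) (hd : 0 < d)
    (μ : Measure (Fin d → ℝ)) [IsProbabilityMeasure μ]
    (hsupp : μ (Set.Icc (0 : Fin d → ℝ) 1) = 1)
    (G : (Fin d → ℝ) → ℝ)
    (hG : ∀ z, G z = (μ {x | ∀ j, x j ≤ z j}).toReal)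
    (hG0 : ∀ z : Fin d → ℝ, (∃ j, z j = 0) → G z = 0)
    (k : Fin d → ℕ) (hk : ∀ j, 0 < k j) :
    ∀ z ∈ Set.Icc (0 : Fin d → ℝ) 1,
      (∑ ν : (∀ j, Fin (k j + 1)),
          G (fun j => (ν j : ℝ) / (k j : ℝ)) *
            ∏ j, ((k j).choose (ν j) : ℝ) * z j ^ (ν j : ℕ) *
              (1 - z j) ^ (k j - (ν j : ℕ))) =
      ∫ x in Set.Icc (0 : Fin d → ℝ) z,
        (∑ ν : (∀ j, Fin (k j)),
          (μ {x : Fin d → ℝ | ∀ j,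
              (ν j : ℝ) / (k j : ℝ) < x j ∧ x j ≤ ((ν j : ℕ) + 1 : ℕ) / (k j : ℝ)}).toReal *
            ∏ j, betaDens (k j) ((ν j : ℕ) + 1) (x j)) := by
  intro z hz
  obtain ⟨hz0, hz1⟩ := hz
  have hz0' : ∀ j, 0 ≤ z j := fun j => hz0 j
  have hG0' : ∀ c : Fin d → ℝ, (∃ j, c j = 0) → μ {x | ∀ j, x j ≤ c j} = 0 := by
    intro c hc
    have h := hG0 c hc
    rw [hG c] at h
    rcases (ENNReal.toReal_eq_zero_iff _).mp h with h' | h'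
    · exact h'
    · exact absurd h' (measure_ne_top μ _)
  set W : (∀ j, Fin (k j)) → ℝ := fun η =>
    (μ {x : Fin d → ℝ | ∀ j,
        (η j : ℝ) / (k j : ℝ) < x j ∧ x j ≤ (((η j : ℕ) + 1 : ℕ) : ℝ) / (k j : ℝ)}).toReal with hW
  have hGν : ∀ ν : (∀ j, Fin (k j + 1)),
      G (fun j => (ν j : ℝ) / (k j : ℝ))
        = ∑ η : (∀ j, Fin (k j)), if (∀ j, (η j : ℕ) < (ν j : ℕ)) then W η else 0 := by
    intro ν
    rw [hG]
    have := stepA d μ hG0' k hk ν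
    have hfin : ∀ η ∈ (Finset.univ : Finset (∀ j, Fin (k j))),
        (if (∀ j, (η j : ℕ) < (ν j : ℕ)) then
          μ {x : Fin d → ℝ | ∀ j,
            (η j : ℝ) / (k j : ℝ) < x j ∧ x j ≤ (((η j : ℕ) + 1 : ℕ) : ℝ) / (k j : ℝ)}
        else 0) ≠ ⊤ := by
      intro η _
      split
      · exact measure_ne_top μ _
      · exact ENNReal.zero_ne_top
    rw [this, ENNReal.toReal_sum hfin]
    refine Finset.sum_congr rfl fun η _ => ?_
    split <;> simp [hW]
  have hbcont : ∀ n m : ℕ, Continuous (betaDens n m) := by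
    intro n m; unfold betaDens; fun_prop
  have hprodcont : ∀ η : (∀ j, Fin (k j)),
      Continuous fun x : Fin d → ℝ => ∏ j, betaDens (k j) ((η j : ℕ) + 1) (x j) := by
    intro η
    exact continuous_finset_prod _ fun j _ => (hbcont _ _).comp (continuous_apply j)
  calc (∑ ν : (∀ j, Fin (k j + 1)),
          G (fun j => (ν j : ℝ) / (k j : ℝ)) *
            ∏ j, ((k j).choose (ν j) : ℝ) * z j ^ (ν j : ℕ)
              * (1 - z j) ^ (k j - (ν j : ℕ)))
      = ∑ ν : (∀ j, Fin (k j + 1)),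
          (∑ η : (∀ j, Fin (k j)), if (∀ j, (η j : ℕ) < (ν j : ℕ)) then W η else 0) *
            ∏ j, ((k j).choose (ν j) : ℝ) * z j ^ (ν j : ℕ)
              * (1 - z j) ^ (k j - (ν j : ℕ)) :=
        Finset.sum_congr rfl fun ν _ => by rw [hGν ν]
    _ = ∑ η : (∀ j, Fin (k j)), W η * ∏ j, (∑ i : Fin (k j + 1),
          if (η j : ℕ) < (i : ℕ) then
            ((k j).choose i : ℝ) * z j ^ (i : ℕ) * (1 - z j) ^ (k j - (i : ℕ)) else 0) :=
        swap_factor d k W (fun j i => ((k j).choose i : ℝ) * z j ^ (i : ℕ)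
          * (1 - z j) ^ (k j - (i : ℕ)))
    _ = ∑ η : (∀ j, Fin (k j)), W η *
          ∏ j, ∫ t in Set.Icc (0:ℝ) (z j), betaDens (k j) ((η j : ℕ) + 1) t := by
        refine Finset.sum_congr rfl fun η _ => ?_
        congr 1
        refine Finset.prod_congr rfl fun j _ => ?_
        rw [key1 (k j) (η j : ℕ) (η j).isLt (z j) (hz0' j)]
    _ = ∑ η : (∀ j, Fin (k j)), W η *
          ∫ x in Set.Icc (0 : Fin d → ℝ) z, ∏ j, betaDens (k j) ((η j : ℕ) + 1) (x j) := by
        refine Finset.sum_congr rfl fun η _ => ?_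
        rw [box_integral d z _ (fun j => hbcont _ _)]
    _ = ∑ η : (∀ j, Fin (k j)), ∫ x in Set.Icc (0 : Fin d → ℝ) z,
          W η * ∏ j, betaDens (k j) ((η j : ℕ) + 1) (x j) := by
        refine Finset.sum_congr rfl fun η _ => ?_
        rw [MeasureTheory.integral_const_mul]
    _ = ∫ x in Set.Icc (0 : Fin d → ℝ) z, ∑ η : (∀ j, Fin (k j)),
          W η * ∏ j, betaDens (k j) ((η j : ℕ) + 1) (x j) := by
        refine (integral_finset_sum _ fun η _ => ?_).symm
        exact (Continuous.integrableOn_Icc (continuous_const.mul (hprodcont η)))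
    _ = ∫ x in Set.Icc (0 : Fin d → ℝ) z,
        (∑ ν : (∀ j, Fin (k j)),
          (μ {x : Fin d → ℝ | ∀ j,
              (ν j : ℝ) / (k j : ℝ) < x j ∧ x j ≤ ((ν j : ℕ) + 1 : ℕ) / (k j : ℝ)}).toReal *
            ∏ j, betaDens (k j) ((ν j : ℕ) + 1) (x j)) := rfl
end

section
/- Hellinger density approximation by grid-uniform copulas: for every copula C on [0,1]^d absolutely continuous with respect to Lebesgue measure with density c ∈ L¹, and every ε > 0, there exists k such that the ρ^k-grid-uniform copula D with cell masses equal to those of C satisfies Hellinger distance H(C, D) < ε. -/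
open MeasureTheory

/-- The half-open grid cell of the uniform grid of degree `k` indexed by `ν`. -/
def gridCell (d : ℕ) (k : Fin d → ℕ) (ν : ∀ j, Fin (k j)) : Set (Fin d → ℝ) :=
  {x | ∀ j, (ν j : ℝ) / (k j : ℝ) < x j ∧ x j ≤ ((ν j : ℕ) + 1 : ℕ) / (k j : ℝ)}

open Set

open scoped ENNReal

namespace GH

variable {d k : ℕ}

noncomputable abbrev cell (d k : ℕ) (ν : Fin d → Fin k) : Set (Fin d → ℝ) :=
  gridCell d (fun _ => k) ν

def box (d : ℕ) : Set (Fin d → ℝ) := Set.pi Set.univ fun _ => Set.Ioc (0:ℝ) 1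

lemma cell_eq (ν : Fin d → Fin k) :
    cell d k ν = Set.pi Set.univ fun j => Set.Ioc ((ν j : ℝ)/k) (((ν j : ℝ)+1)/k) := by
  ext x
  simp only [cell, gridCell, Set.mem_setOf_eq, Set.mem_pi, Set.mem_univ, forall_true_left,
    Set.mem_Ioc]
  push_cast
  rfl

lemma measurableSet_cell (ν : Fin d → Fin k) : MeasurableSet (cell d k ν) := by
  rw [cell_eq]; exact MeasurableSet.univ_pi fun j => measurableSet_Ioc

lemma cell_subset_box (hk : 0 < k) (ν : Fin d → Fin k) : cell d k ν ⊆ box d := by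
  rw [cell_eq]
  refine Set.pi_mono fun j _ => Set.Ioc_subset_Ioc ?_ ?_
  · positivity
  · have h1 : ((ν j : ℝ) + 1) ≤ (k : ℝ) := by
      have := (ν j).is_lt
      exact_mod_cast Nat.succ_le_of_lt this
    rw [div_le_one (by exact_mod_cast hk)]
    exact h1

lemma box_subset_Icc : box d ⊆ Set.Icc (0 : Fin d → ℝ) 1 := by
  intro x hx
  constructor <;> intro j
  · exact (hx j (Set.mem_univ j)).1.le
  · exact (hx j (Set.mem_univ j)).2

lemma volume_cell (hk : 0 < k) (ν : Fin d → Fin k) :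
    volume (cell d k ν) = ENNReal.ofReal (1/(k:ℝ)) ^ d := by
  rw [cell_eq, volume_pi_pi]
  have : ∀ j, volume (Set.Ioc ((ν j : ℝ)/k) (((ν j : ℝ)+1)/k)) = ENNReal.ofReal (1/(k:ℝ)) := by
    intro j
    rw [Real.volume_Ioc]
    congr 1
    field_simp; ring
  simp [this]

lemma volume_box : volume (box d) = 1 := by
  rw [box, volume_pi_pi]; simp

lemma volume_Icc01 : volume (Set.Icc (0 : Fin d → ℝ) 1) = 1 := by
  rw [← Set.pi_univ_Icc, volume_pi_pi]; simp

lemma disjoint_cell {ν ν' : Fin d → Fin k} (h : ν ≠ ν') :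
    Disjoint (cell d k ν) (cell d k ν') := by
  rw [Set.disjoint_left]
  intro x hx hx'
  obtain ⟨j, hj⟩ := Function.ne_iff.1 h
  have h1 := hx j; have h2 := hx' j
  simp only [gridCell, Set.mem_setOf_eq] at h1 h2
  have hk0 : (0:ℝ) < k := by exact_mod_cast (ν j).pos
  have key : ∀ a b : ℕ, a < b → ((a:ℝ)+1)/k ≤ (b:ℝ)/k := by
    intro a b hab
    have : ((a:ℝ)+1) ≤ (b:ℝ) := by exact_mod_cast Nat.succ_le_of_lt hab
    exact div_le_div_of_nonneg_right this hk0.le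
  rcases Nat.lt_or_ge (ν j : ℕ) (ν' j : ℕ) with hlt | hge
  · have hle := key _ _ hlt
    have hA : x j ≤ ((ν j : ℝ)+1)/k := by
      have := h1.2; push_cast at this ⊢; exact this
    exact absurd (hA.trans hle) (not_le.2 h2.1)
  · have hlt' : (ν' j : ℕ) < (ν j : ℕ) := by
      rcases Nat.lt_or_ge (ν' j : ℕ) (ν j : ℕ) with hh | hh
      · exact hh
      · exact absurd (Fin.ext (Nat.le_antisymm hh hge) : ν j = ν' j) hj
    have hle := key _ _ hlt'
    have hA : x j ≤ ((ν' j : ℝ)+1)/k := by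
      have := h2.2; push_cast at this ⊢; exact this
    exact absurd (hA.trans hle) (not_le.2 h1.1)

lemma iUnion_cell (hk : 0 < k) : (⋃ ν : Fin d → Fin k, cell d k ν) = box d := by
  apply Set.Subset.antisymm
  · exact Set.iUnion_subset fun ν => cell_subset_box hk ν
  · intro x hx
    have hk0 : (0:ℝ) < k := by exact_mod_cast hk
    have key : ∀ j, ∃ m : Fin k, ((m : ℝ)/k < x j ∧ x j ≤ (((m : ℕ)+1 : ℕ):ℝ)/k) := by
      intro j
      have hxj := hx j (Set.mem_univ j)
      rw [Set.mem_Ioc] at hxj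
      set N := ⌈x j * k⌉₊ with hN
      have hN1 : 1 ≤ N := Nat.one_le_ceil_iff.2 (mul_pos hxj.1 hk0)
      have hNk : N ≤ k := Nat.ceil_le.2 (by nlinarith [hxj.2])
      refine ⟨⟨N - 1, by omega⟩, ?_, ?_⟩
      · have h1 : (N : ℝ) < x j * k + 1 := Nat.ceil_lt_add_one (le_of_lt (mul_pos hxj.1 hk0))
        have hcast : ((N - 1 : ℕ) : ℝ) = (N : ℝ) - 1 := by
          push_cast [Nat.cast_sub hN1]; ring
        rw [div_lt_iff₀ hk0]
        simp only [hcast]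
        linarith
      · have h2 : x j * k ≤ (N : ℝ) := Nat.le_ceil _
        have hcast : ((N - 1 : ℕ) : ℝ) = (N : ℝ) - 1 := by
          push_cast [Nat.cast_sub hN1]; ring
        rw [le_div_iff₀ hk0]
        push_cast [hcast]
        linarith
    choose ν hν using key
    exact Set.mem_iUnion.2 ⟨ν, fun j => hν j⟩

lemma ae_mem_box (hd : 0 < d) :
    ∀ᵐ x ∂(volume.restrict (Set.Icc (0 : Fin d → ℝ) 1)), x ∈ box d := by
  rw [ae_restrict_iff' measurableSet_Icc]
  rw [ae_iff]
  have hsub : {x : Fin d → ℝ | ¬(x ∈ Set.Icc (0:Fin d → ℝ) 1 → x ∈ box d)} ⊆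
      Set.Icc (0 : Fin d → ℝ) 1 \ box d := by
    intro x hx
    simp only [Set.mem_setOf_eq, Classical.not_imp] at hx
    exact ⟨hx.1, hx.2⟩
  refine measure_mono_null hsub ?_
  have h1 : volume (Set.Icc (0 : Fin d → ℝ) 1 \ box d) =
      volume (Set.Icc (0 : Fin d → ℝ) 1) - volume (box d) := by
    apply measure_diff box_subset_Icc
      (MeasurableSet.univ_pi fun _ => measurableSet_Ioc).nullMeasurableSet
    rw [volume_box]; exact ENNReal.one_ne_top
  rw [h1, volume_box, volume_Icc01, tsub_self]


noncomputable def avg (d k : ℕ) (f : (Fin d → ℝ) → ℝ) : (Fin d → ℝ) → ℝ :=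
  fun x => ∑ ν : Fin d → Fin k, (cell d k ν).indicator
    (fun _ => (∫ y in cell d k ν, f y) * (k:ℝ)^d) x

lemma measurable_avg (f : (Fin d → ℝ) → ℝ) : Measurable (avg d k f) := by
  apply Finset.measurable_sum
  intro ν _
  exact Measurable.indicator measurable_const (measurableSet_cell ν)

lemma integrableOn_avg (hd : 0 < d) (f : (Fin d → ℝ) → ℝ) :
    IntegrableOn (avg d k f) (Set.Icc (0 : Fin d → ℝ) 1) volume := by
  apply integrable_finset_sum
  intro ν _
  rw [integrable_indicator_iff (measurableSet_cell ν)]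
  refine integrableOn_const (LT.lt.ne ?_)
  rw [Measure.restrict_apply (measurableSet_cell ν)]
  exact (measure_mono Set.inter_subset_right).trans_lt
    (by rw [volume_Icc01]; exact ENNReal.one_lt_top)

lemma avg_apply_mem (f : (Fin d → ℝ) → ℝ) {ν : Fin d → Fin k} {x : Fin d → ℝ}
    (hx : x ∈ cell d k ν) :
    avg d k f x = (∫ y in cell d k ν, f y) * (k:ℝ)^d := by
  rw [avg, Finset.sum_eq_single ν]
  · rw [Set.indicator_of_mem hx]
  · intro ν' _ hne
    rw [Set.indicator_of_notMem]
    exact fun hx' => absurd rfl ((disjoint_cell hne).ne_of_mem hx' hx)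
  · intro habs
    exact absurd (Finset.mem_univ ν) habs

lemma toReal_volume_cell_mul (hk : 0 < k) (ν : Fin d → Fin k) :
    (volume (cell d k ν)).toReal * (k:ℝ)^d = 1 := by
  rw [volume_cell hk]
  have hk0 : (0:ℝ) < k := by exact_mod_cast hk
  rw [ENNReal.toReal_pow, ENNReal.toReal_ofReal (by positivity)]
  rw [← mul_pow, one_div, inv_mul_cancel₀ (ne_of_gt hk0), one_pow]

lemma avg_contraction (hd : 0 < d) (hk : 0 < k) {f : (Fin d → ℝ) → ℝ}
    (hf : Integrable f volume) :
    ∫ x in Set.Icc (0 : Fin d → ℝ) 1, |avg d k f x| ≤ ∫ x, |f x| := by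
  have habs : ∀ x, |avg d k f x| ≤ ∑ ν : Fin d → Fin k,
      (cell d k ν).indicator (fun _ => |∫ y in cell d k ν, f y| * (k:ℝ)^d) x := by
    intro x
    refine (Finset.abs_sum_le_sum_abs _ _).trans ?_
    apply Finset.sum_le_sum
    intro ν _
    by_cases hx : x ∈ cell d k ν
    · rw [Set.indicator_of_mem hx, Set.indicator_of_mem hx, abs_mul, abs_pow, abs_of_nonneg
        (by positivity : (0:ℝ) ≤ (k:ℝ))]
    · rw [Set.indicator_of_notMem hx, Set.indicator_of_notMem hx, abs_zero]
  have hint : ∀ ν : Fin d → Fin k, IntegrableOn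
      ((cell d k ν).indicator (fun _ => |∫ y in cell d k ν, f y| * (k:ℝ)^d))
      (Set.Icc (0 : Fin d → ℝ) 1) volume := by
    intro ν
    rw [IntegrableOn, integrable_indicator_iff (measurableSet_cell ν)]
    refine integrableOn_const (LT.lt.ne ?_)
    rw [Measure.restrict_apply (measurableSet_cell ν)]
    exact (measure_mono Set.inter_subset_right).trans_lt
      (by rw [volume_Icc01]; exact ENNReal.one_lt_top)
  calc ∫ x in Set.Icc (0 : Fin d → ℝ) 1, |avg d k f x|
      ≤ ∫ x in Set.Icc (0 : Fin d → ℝ) 1, ∑ ν : Fin d → Fin k,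
        (cell d k ν).indicator (fun _ => |∫ y in cell d k ν, f y| * (k:ℝ)^d) x := by
        apply integral_mono_ae ((integrableOn_avg hd f).abs) (integrable_finset_sum _
          (fun ν _ => hint ν))
        exact Filter.Eventually.of_forall habs
    _ = ∑ ν : Fin d → Fin k, ∫ x in Set.Icc (0 : Fin d → ℝ) 1,
        (cell d k ν).indicator (fun _ => |∫ y in cell d k ν, f y| * (k:ℝ)^d) x :=
        integral_finset_sum _ (fun ν _ => hint ν)
    _ = ∑ ν : Fin d → Fin k, |∫ y in cell d k ν, f y| := by
        apply Finset.sum_congr rfl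
        intro ν _
        rw [integral_indicator_const _ (measurableSet_cell ν)]
        rw [Measure.real, Measure.restrict_apply (measurableSet_cell ν)]
        have : cell d k ν ∩ Set.Icc (0 : Fin d → ℝ) 1 = cell d k ν :=
          Set.inter_eq_left.2 ((cell_subset_box hk ν).trans box_subset_Icc)
        rw [this]
        rw [smul_eq_mul, show (volume (cell d k ν)).toReal * (|∫ y in cell d k ν, f y| * (k:ℝ)^d)
          = ((volume (cell d k ν)).toReal * (k:ℝ)^d) * |∫ y in cell d k ν, f y| from by ring,
          toReal_volume_cell_mul hk, one_mul]
    _ ≤ ∑ ν : Fin d → Fin k, ∫ y in cell d k ν, |f y| := by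
        apply Finset.sum_le_sum
        intro ν _
        simpa using norm_integral_le_integral_norm (μ := volume.restrict (cell d k ν)) f
    _ = ∫ y in ⋃ ν : Fin d → Fin k, cell d k ν, |f y| := by
        rw [integral_iUnion_fintype measurableSet_cell (fun a b hab => disjoint_cell hab)
          (fun ν => hf.abs.integrableOn)]
    _ ≤ ∫ x, |f x| := by
        apply setIntegral_le_integral hf.abs
        exact Filter.Eventually.of_forall (fun x => abs_nonneg _)


lemma dist_le_of_mem_cell (hk : 0 < k) {ν : Fin d → Fin k} {x y : Fin d → ℝ}
    (hx : x ∈ cell d k ν) (hy : y ∈ cell d k ν) : dist x y ≤ 1 / (k:ℝ) := by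
  have hk0 : (0:ℝ) < k := by exact_mod_cast hk
  refine (dist_pi_le_iff (by positivity)).2 fun j => ?_
  have h1 := hx j; have h2 := hy j
  simp only [gridCell, Set.mem_setOf_eq] at h1 h2
  rw [Real.dist_eq, abs_sub_le_iff]
  have e1 : (((ν j : ℕ) + 1 : ℕ) : ℝ) / k - (ν j : ℝ) / k = 1 / k := by
    push_cast; field_simp; ring
  constructor <;> nlinarith [h1.1, h1.2, h2.1, h2.2, e1]

lemma cont_approx (hd : 0 < d) {h : (Fin d → ℝ) → ℝ} (hcont : Continuous h)
    (hsupp : HasCompactSupport h) {δ : ℝ} (hδ : 0 < δ) :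
    ∃ k : ℕ, 0 < k ∧ ∫ x in Set.Icc (0 : Fin d → ℝ) 1, |h x - avg d k h x| ≤ δ / 2 := by
  have huc : UniformContinuous h := hsupp.uniformContinuous_of_continuous hcont
  rw [Metric.uniformContinuous_iff] at huc
  obtain ⟨η, hη, hmod⟩ := huc (δ / 2) (by positivity)
  set k : ℕ := ⌈1/η⌉₊ + 1 with hkdef
  have hk : 0 < k := Nat.succ_pos _
  have hk0 : (0:ℝ) < k := by exact_mod_cast hk
  have hkη : 1 / (k:ℝ) < η := by
    rw [div_lt_iff₀ hk0]
    have h1 : (1:ℝ)/η ≤ ⌈1/η⌉₊ := Nat.le_ceil _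
    have h2 : ((⌈1/η⌉₊ : ℝ)) < k := by exact_mod_cast Nat.lt_succ_self _
    calc (1:ℝ) = η * (1/η) := by field_simp
      _ < η * k := by
          apply mul_lt_mul_of_pos_left _ hη
          linarith
  have hint : Integrable h volume := hcont.integrable_of_hasCompactSupport hsupp
  refine ⟨k, hk, ?_⟩
  have hbound : ∀ x ∈ box d, |h x - avg d k h x| ≤ δ / 2 := by
    intro x hx
    rw [← iUnion_cell hk] at hx
    obtain ⟨ν, hν⟩ := Set.mem_iUnion.1 hx
    rw [avg_apply_mem h hν]
    have hvol : (volume (cell d k ν)).toReal * (k:ℝ)^d = 1 := toReal_volume_cell_mul hk ν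
    have hvolfin : volume (cell d k ν) < ⊤ := by
      rw [volume_cell hk]; exact ENNReal.pow_lt_top ENNReal.ofReal_lt_top
    have hconst : IntegrableOn (fun _ : Fin d → ℝ => h x) (cell d k ν) volume :=
      integrableOn_const hvolfin.ne
    have heq : h x - (∫ y in cell d k ν, h y) * (k:ℝ)^d
        = (∫ y in cell d k ν, (h x - h y)) * (k:ℝ)^d := by
      rw [integral_sub hconst hint.integrableOn, setIntegral_const, smul_eq_mul, sub_mul]
      congr 1
      rw [Measure.real, show (volume (cell d k ν)).toReal * h x * (k:ℝ)^d
        = ((volume (cell d k ν)).toReal * (k:ℝ)^d) * h x from by ring, hvol, one_mul]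
    rw [heq, abs_mul, abs_of_nonneg (by positivity : (0:ℝ) ≤ (k:ℝ)^d)]
    have key : ‖∫ y in cell d k ν, (h x - h y)‖ ≤ (δ/2) * (volume (cell d k ν)).toReal := by
      apply norm_setIntegral_le_of_norm_le_const hvolfin
      intro y hy
      rw [Real.norm_eq_abs, ← Real.dist_eq]
      exact le_of_lt (hmod ((dist_le_of_mem_cell hk hν hy).trans_lt hkη)) |>.trans
        (le_of_eq rfl)
    rw [Real.norm_eq_abs] at key
    calc |∫ y in cell d k ν, (h x - h y)| * (k:ℝ)^d
        ≤ ((δ/2) * (volume (cell d k ν)).toReal) * (k:ℝ)^d := by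
          apply mul_le_mul_of_nonneg_right key (by positivity)
      _ = (δ/2) * ((volume (cell d k ν)).toReal * (k:ℝ)^d) := by ring
      _ = δ/2 := by rw [hvol, mul_one]
  have hintabs : IntegrableOn (fun x => |h x - avg d k h x|) (Set.Icc (0 : Fin d → ℝ) 1) volume :=
    (hint.integrableOn.sub (integrableOn_avg hd h)).abs
  calc ∫ x in Set.Icc (0 : Fin d → ℝ) 1, |h x - avg d k h x|
      ≤ ∫ _x in Set.Icc (0 : Fin d → ℝ) 1, (δ/2 : ℝ) := by
        apply integral_mono_ae hintabs (integrableOn_const (LT.lt.ne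
          (by rw [volume_Icc01]; exact ENNReal.one_lt_top)))
        filter_upwards [ae_mem_box hd] with x hx
        exact hbound x hx
    _ = δ/2 := by
        rw [setIntegral_const, Measure.real, volume_Icc01, ENNReal.toReal_one, one_smul]

lemma avg_sub (hk : 0 < k) {f g : (Fin d → ℝ) → ℝ} (hf : Integrable f volume)
    (hg : Integrable g volume) (x : Fin d → ℝ) :
    avg d k f x - avg d k g x = avg d k (fun y => f y - g y) x := by
  rw [avg, avg, avg, ← Finset.sum_sub_distrib]
  apply Finset.sum_congr rfl
  intro ν _
  by_cases hx : x ∈ cell d k ν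
  · rw [Set.indicator_of_mem hx, Set.indicator_of_mem hx, Set.indicator_of_mem hx,
      integral_sub hf.integrableOn hg.integrableOn, sub_mul]
  · rw [Set.indicator_of_notMem hx, Set.indicator_of_notMem hx, Set.indicator_of_notMem hx,
      sub_zero]

lemma core (hd : 0 < d) {f : (Fin d → ℝ) → ℝ} (hf : Integrable f volume) {δ : ℝ} (hδ : 0 < δ) :
    ∃ k : ℕ, 0 < k ∧ ∫ x in Set.Icc (0 : Fin d → ℝ) 1, |f x - avg d k f x| < δ := by
  obtain ⟨h, hsupp, hdist, hcont, hhint⟩ :=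
    hf.exists_hasCompactSupport_integral_sub_le (μ := volume) (show (0:ℝ) < δ/8 by positivity)
  obtain ⟨k, hk, hck⟩ := cont_approx hd hcont hsupp (show (0:ℝ) < δ/2 by positivity)
  refine ⟨k, hk, ?_⟩
  have hIccfin : volume (Set.Icc (0 : Fin d → ℝ) 1) < ⊤ := by
    rw [volume_Icc01]; exact ENNReal.one_lt_top
  have hsub : Integrable (fun y => f y - h y) volume := hf.sub hhint
  have I1 : ∫ x in Set.Icc (0 : Fin d → ℝ) 1, |f x - h x| ≤ δ/8 := by
    refine le_trans ?_ hdist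
    have : ∀ x, |f x - h x| = ‖f x - h x‖ := fun x => (Real.norm_eq_abs _).symm
    simp_rw [this]
    exact setIntegral_le_integral hsub.norm (Filter.Eventually.of_forall fun x => norm_nonneg _)
  have I3 : ∫ x in Set.Icc (0 : Fin d → ℝ) 1, |avg d k h x - avg d k f x| ≤ δ/8 := by
    have : ∀ x, avg d k h x - avg d k f x = avg d k (fun y => h y - f y) x :=
      avg_sub hk hhint hf
    simp_rw [this]
    refine (avg_contraction hd hk (hhint.sub hf)).trans ?_
    have heq : (∫ x, |(h - f) x|) = ∫ x, ‖f x - h x‖ := by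
      congr 1; funext x; simp [Real.norm_eq_abs, abs_sub_comm]
    rw [heq]; exact hdist
  have hi1 : IntegrableOn (fun x => |f x - h x|) (Set.Icc (0 : Fin d → ℝ) 1) volume :=
    hsub.integrableOn.abs
  have hi2 : IntegrableOn (fun x => |h x - avg d k h x|) (Set.Icc (0 : Fin d → ℝ) 1) volume :=
    (hhint.integrableOn.sub (integrableOn_avg hd h)).abs
  have hi3 : IntegrableOn (fun x => |avg d k h x - avg d k f x|) (Set.Icc (0 : Fin d → ℝ) 1)
      volume := ((integrableOn_avg hd h).sub (integrableOn_avg hd f)).abs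
  have tri : ∀ x, |f x - avg d k f x| ≤
      |f x - h x| + |h x - avg d k h x| + |avg d k h x - avg d k f x| := by
    intro x
    calc |f x - avg d k f x| = |(f x - h x) + (h x - avg d k h x) + (avg d k h x - avg d k f x)| :=
          by ring_nf
      _ ≤ _ := by
          refine (abs_add_le _ _).trans (add_le_add (abs_add_le _ _) le_rfl)
  calc ∫ x in Set.Icc (0 : Fin d → ℝ) 1, |f x - avg d k f x|
      ≤ ∫ x in Set.Icc (0 : Fin d → ℝ) 1,
        (|f x - h x| + |h x - avg d k h x| + |avg d k h x - avg d k f x|) := by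
        apply integral_mono_ae ((hf.integrableOn.sub (integrableOn_avg hd f)).abs)
          ((hi1.add hi2).add hi3)
        exact Filter.Eventually.of_forall tri
    _ = (∫ x in Set.Icc (0 : Fin d → ℝ) 1, |f x - h x|)
        + (∫ x in Set.Icc (0 : Fin d → ℝ) 1, |h x - avg d k h x|)
        + ∫ x in Set.Icc (0 : Fin d → ℝ) 1, |avg d k h x - avg d k f x| := by
        have hi12 : IntegrableOn (fun x => |f x - h x| + |h x - avg d k h x|)
            (Set.Icc (0 : Fin d → ℝ) 1) volume := hi1.add hi2
        rw [integral_add hi12 hi3, integral_add hi1 hi2]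
    _ ≤ δ/8 + δ/2/2 + δ/8 := by
        exact add_le_add (add_le_add I1 hck) I3
    _ < δ := by linarith



lemma sqrt_diff_sq_le_abs {a b : ℝ} (ha : 0 ≤ a) (hb : 0 ≤ b) :
    (Real.sqrt a - Real.sqrt b)^2 ≤ |a - b| := by
  rcases le_total a b with h | h
  · rw [abs_of_nonpos (by linarith)]
    have hs : Real.sqrt a ≤ Real.sqrt b := Real.sqrt_le_sqrt h
    have h1 := Real.sq_sqrt ha
    have h2 := Real.sq_sqrt hb
    have h3 := mul_le_mul_of_nonneg_left hs (Real.sqrt_nonneg a)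
    nlinarith [Real.sqrt_nonneg a, Real.sqrt_nonneg b]
  · rw [abs_of_nonneg (by linarith)]
    have hs : Real.sqrt b ≤ Real.sqrt a := Real.sqrt_le_sqrt h
    have h1 := Real.sq_sqrt ha
    have h2 := Real.sq_sqrt hb
    have h3 := mul_le_mul_of_nonneg_left hs (Real.sqrt_nonneg b)
    nlinarith [Real.sqrt_nonneg a, Real.sqrt_nonneg b]

lemma ofReal_abs_min (a b : ℝ) (ha : 0 ≤ a) (hb : 0 ≤ b) :
    ENNReal.ofReal |a - b| + 2 * min (ENNReal.ofReal a) (ENNReal.ofReal b)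
      = ENNReal.ofReal a + ENNReal.ofReal b := by
  have key : ∀ u v : ℝ, 0 ≤ u → 0 ≤ v → u ≤ v →
      ENNReal.ofReal (v - u) + 2 * ENNReal.ofReal u = ENNReal.ofReal u + ENNReal.ofReal v := by
    intro u v hu hv huv
    calc ENNReal.ofReal (v-u) + 2 * ENNReal.ofReal u
        = ENNReal.ofReal (v-u) + ENNReal.ofReal (2*u) := by
          rw [ENNReal.ofReal_mul (by norm_num : (0:ℝ) ≤ 2), ENNReal.ofReal_ofNat]
      _ = ENNReal.ofReal ((v-u) + 2*u) := (ENNReal.ofReal_add (by linarith) (by linarith)).symm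
      _ = ENNReal.ofReal (u + v) := by rw [show (v-u) + 2*u = u + v from by ring]
      _ = _ := ENNReal.ofReal_add hu hv
  rcases le_total a b with h | h
  · rw [abs_of_nonpos (by linarith), min_eq_left (ENNReal.ofReal_le_ofReal h), neg_sub]
    exact key a b ha hb h
  · rw [abs_of_nonneg (by linarith), min_eq_right (ENNReal.ofReal_le_ofReal h), add_comm
      (ENNReal.ofReal a)]
    exact key b a hb ha h

end GH

open scoped ENNReal


/-- every absolutely continuous copula can be approximated
arbitrarily well in Hellinger distance by the grid-uniform copula with the same
cell masses. -/
theorem grid_uniform_hellinger_approximation (d : ℕ) (hd : 0 < d)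
    (C : Measure (Fin d → ℝ)) [IsProbabilityMeasure C]
    (c : (Fin d → ℝ) → ℝ) (hc : ∀ x, 0 ≤ c x)
    (hC : C = (volume.restrict (Set.Icc (0 : Fin d → ℝ) 1)).withDensity
      (fun x => ENNReal.ofReal (c x)))
    (hmarg : ∀ j, C.map (fun x => x j) = volume.restrict (Set.Icc (0 : ℝ) 1)) :
    ∀ ε > (0 : ℝ), ∃ kk : ℕ, 0 < kk ∧
      (1 / 2) * ∫ x in Set.Icc (0 : Fin d → ℝ) 1,
          (Real.sqrt (c x) -
            Real.sqrt (∑ ν : (∀ _ : Fin d, Fin kk),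
              Set.indicator (gridCell d (fun _ => kk) ν)
                (fun _ => (C (gridCell d (fun _ => kk) ν)).toReal * (kk : ℝ) ^ d) x)) ^ 2
        < ε ^ 2 := by
  intro ε hε
  classical
  set μ : Measure (Fin d → ℝ) := volume.restrict (Set.Icc (0 : Fin d → ℝ) 1) with hμdef
  haveI hμfin : IsFiniteMeasure μ := ⟨by
    rw [hμdef, Measure.restrict_apply_univ, GH.volume_Icc01]; exact ENNReal.one_lt_top⟩
  set c' : (Fin d → ℝ) → ℝ≥0∞ := fun x => ENNReal.ofReal (c x) with hc'def
  have hCapp : ∀ s : Set (Fin d → ℝ), MeasurableSet s → C s = ∫⁻ x in s, c' x ∂μ := by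
    intro s hs
    rw [hC]
    exact withDensity_apply _ hs
  have hlintc : ∫⁻ x, c' x ∂μ = 1 := by
    rw [← setLIntegral_univ, ← hCapp _ MeasurableSet.univ]
    exact measure_univ
  obtain ⟨g, hgmeas, hgle, hglint⟩ := exists_measurable_le_lintegral_eq μ c'
  have hglint1 : ∫⁻ x, g x ∂μ = 1 := by rw [← hglint, hlintc]
  have hac : C ≪ μ := by rw [hC]; exact withDensity_absolutelyContinuous _ _
  have hrn : μ.withDensity (C.rnDeriv μ) = C := Measure.withDensity_rnDeriv_eq C μ hac
  have hCrn : ∀ s : Set (Fin d → ℝ), MeasurableSet s →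
      C s = ∫⁻ x in s, C.rnDeriv μ x ∂μ := by
    intro s hs
    conv_lhs => rw [← hrn]
    exact withDensity_apply _ hs
  have hglern : g ≤ᵐ[μ] C.rnDeriv μ := by
    apply ae_le_of_forall_setLIntegral_le_of_sigmaFinite hgmeas
    intro s hs _
    calc ∫⁻ x in s, g x ∂μ ≤ ∫⁻ x in s, c' x ∂μ := lintegral_mono fun x => hgle x
      _ = C s := (hCapp s hs).symm
      _ = ∫⁻ x in s, C.rnDeriv μ x ∂μ := hCrn s hs
  have hrnlint : ∫⁻ x, C.rnDeriv μ x ∂μ = 1 := by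
    rw [← setLIntegral_univ, ← hCrn _ MeasurableSet.univ]
    exact measure_univ
  have hgeq : g =ᵐ[μ] C.rnDeriv μ :=
    ae_eq_of_ae_le_of_lintegral_le hglern (by rw [hglint1]; exact ENNReal.one_ne_top)
      (Measure.measurable_rnDeriv C μ).aemeasurable (by rw [hglint1, hrnlint])
  set g₂ : (Fin d → ℝ) → ℝ≥0∞ := (Set.Icc (0 : Fin d → ℝ) 1).indicator g with hg₂def
  have hg₂meas : Measurable g₂ := hgmeas.indicator measurableSet_Icc
  have hg₂lint : ∫⁻ x, g₂ x ∂(volume : Measure (Fin d → ℝ)) = 1 := by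
    rw [hg₂def, lintegral_indicator measurableSet_Icc]
    exact hglint1
  have hg₂fin : ∀ᵐ x ∂(volume : Measure (Fin d → ℝ)), g₂ x < ∞ :=
    ae_lt_top hg₂meas (by rw [hg₂lint]; exact ENNReal.one_ne_top)
  set f : (Fin d → ℝ) → ℝ := fun x => (g₂ x).toReal with hfdef
  have hf0 : ∀ x, 0 ≤ f x := fun x => ENNReal.toReal_nonneg
  have hfint : Integrable f volume := integrable_toReal_of_lintegral_ne_top hg₂meas.aemeasurable
      (by rw [hg₂lint]; exact ENNReal.one_ne_top)
  have hofReal_f : ∀ᵐ x ∂(volume : Measure (Fin d → ℝ)), ENNReal.ofReal (f x) = g₂ x := by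
    filter_upwards [hg₂fin] with x hx
    exact ENNReal.ofReal_toReal hx.ne
  obtain ⟨k, hk, hcore⟩ := GH.core hd hfint (show (0:ℝ) < ε^2/4 by positivity)
  refine ⟨k, hk, ?_⟩
  set D : (Fin d → ℝ) → ℝ := fun x => ∑ ν : (∀ _ : Fin d, Fin k),
    Set.indicator (gridCell d (fun _ => k) ν)
      (fun _ => (C (gridCell d (fun _ => k) ν)).toReal * (k : ℝ) ^ d) x with hDdef
  have hcellsub : ∀ ν : Fin d → Fin k, GH.cell d k ν ⊆ Set.Icc (0 : Fin d → ℝ) 1 :=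
    fun ν => (GH.cell_subset_box hk ν).trans GH.box_subset_Icc
  have hCcell : ∀ ν : Fin d → Fin k,
      C (GH.cell d k ν) = ENNReal.ofReal (∫ y in GH.cell d k ν, f y) := by
    intro ν
    have hcellm := GH.measurableSet_cell (d := d) (k := k) ν
    have hres : μ.restrict (GH.cell d k ν) = volume.restrict (GH.cell d k ν) := by
      rw [hμdef, Measure.restrict_restrict hcellm, Set.inter_eq_left.2 (hcellsub ν)]
    calc C (GH.cell d k ν) = ∫⁻ x in GH.cell d k ν, C.rnDeriv μ x ∂μ := hCrn _ hcellm
      _ = ∫⁻ x in GH.cell d k ν, g x ∂μ := lintegral_congr_ae (ae_restrict_of_ae hgeq.symm)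
      _ = ∫⁻ x in GH.cell d k ν, g x ∂volume := by rw [hres]
      _ = ∫⁻ x in GH.cell d k ν, g₂ x ∂volume := (setLIntegral_congr_fun_ae hcellm
          (Filter.Eventually.of_forall fun x hx =>
            (Set.indicator_of_mem (hcellsub ν hx) g).symm))
      _ = ∫⁻ x in GH.cell d k ν, ENNReal.ofReal (f x) ∂volume :=
          lintegral_congr_ae (ae_restrict_of_ae (hofReal_f.mono fun x hx => hx.symm))
      _ = ENNReal.ofReal (∫ y in GH.cell d k ν, f y) :=
          (ofReal_integral_eq_lintegral_ofReal hfint.integrableOn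
            (Filter.Eventually.of_forall fun x => hf0 x)).symm
  have hD_avg : ∀ x, D x = GH.avg d k f x := by
    intro x
    rw [hDdef, GH.avg]
    apply Finset.sum_congr rfl
    intro ν _
    congr 1
    funext y
    rw [hCcell ν, ENNReal.toReal_ofReal (integral_nonneg fun y => hf0 y)]
  have hD0 : ∀ x, 0 ≤ D x := by
    intro x
    apply Finset.sum_nonneg
    intro ν _
    apply Set.indicator_nonneg
    intro y _
    have := ENNReal.toReal_nonneg (a := C (gridCell d (fun _ => k) ν))
    positivity
  set E' : (Fin d → ℝ) → ℝ≥0∞ := fun x => ENNReal.ofReal (D x) with hE'def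
  have hDmeas : Measurable D := by
    have : D = GH.avg d k f := funext hD_avg
    rw [this]
    exact GH.measurable_avg f
  have hE'meas : Measurable E' := ENNReal.measurable_ofReal.comp hDmeas
  -- ∫⁻ E' ∂μ ≤ 1
  have hE'eq : ∀ x, E' x = ∑ ν : Fin d → Fin k,
      (GH.cell d k ν).indicator
        (fun _ => C (GH.cell d k ν) * ENNReal.ofReal ((k:ℝ)^d)) x := by
    intro x
    show ENNReal.ofReal (∑ ν : Fin d → Fin k, (GH.cell d k ν).indicator
      (fun _ => (C (GH.cell d k ν)).toReal * (k:ℝ)^d) x) = _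
    rw [ENNReal.ofReal_sum_of_nonneg (fun ν _ => Set.indicator_nonneg
      (fun y _ => by positivity) x)]
    apply Finset.sum_congr rfl
    intro ν _
    by_cases hx : x ∈ GH.cell d k ν
    · rw [Set.indicator_of_mem hx, Set.indicator_of_mem hx,
        ENNReal.ofReal_mul ENNReal.toReal_nonneg,
        ENNReal.ofReal_toReal (measure_ne_top C _)]
    · rw [Set.indicator_of_notMem hx, Set.indicator_of_notMem hx, ENNReal.ofReal_zero]
  have hE'lint : ∫⁻ x, E' x ∂μ ≤ 1 := by
    have h1 : ∫⁻ x, E' x ∂μ = ∑ ν : Fin d → Fin k,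
        (C (GH.cell d k ν) * ENNReal.ofReal ((k:ℝ)^d)) * μ (GH.cell d k ν) := by
      rw [lintegral_congr hE'eq, lintegral_finset_sum' _
        (fun ν _ => (Measurable.indicator measurable_const
          (GH.measurableSet_cell ν)).aemeasurable)]
      apply Finset.sum_congr rfl
      intro ν _
      rw [lintegral_indicator (GH.measurableSet_cell ν), setLIntegral_const]
    have h2 : ∀ ν : Fin d → Fin k, ENNReal.ofReal ((k:ℝ)^d) * μ (GH.cell d k ν) = 1 := by
      intro ν
      have hμcell : μ (GH.cell d k ν) = volume (GH.cell d k ν) := by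
        rw [hμdef, Measure.restrict_apply (GH.measurableSet_cell ν),
          Set.inter_eq_left.2 (hcellsub ν)]
      have hk0 : (0:ℝ) < k := by exact_mod_cast hk
      rw [hμcell, GH.volume_cell hk,
        show ENNReal.ofReal ((k:ℝ)^d) = (ENNReal.ofReal (k:ℝ))^d from
          by rw [ENNReal.ofReal_pow hk0.le],
        ← mul_pow, ← ENNReal.ofReal_mul hk0.le]
      rw [show (k:ℝ) * (1/(k:ℝ)) = 1 from by field_simp]
      simp
    have h3 : ∫⁻ x, E' x ∂μ = ∑ ν : Fin d → Fin k, C (GH.cell d k ν) := by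
      rw [h1]
      apply Finset.sum_congr rfl
      intro ν _
      rw [mul_assoc, h2 ν, mul_one]
    rw [h3]
    have h4 : ∑ ν : Fin d → Fin k, C (GH.cell d k ν)
        = C (⋃ ν : Fin d → Fin k, GH.cell d k ν) := by
      rw [measure_iUnion (fun a b hab => GH.disjoint_cell hab) GH.measurableSet_cell,
        tsum_fintype]
    rw [h4]
    calc C (⋃ ν : Fin d → Fin k, GH.cell d k ν) ≤ C Set.univ :=
          measure_mono (Set.subset_univ _)
      _ = 1 := measure_univ
  -- lower bound for the min-integral
  set t : ℝ≥0∞ := ∫⁻ x, (g x - E' x) ∂μ with htdef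
  have hmin_le : (1:ℝ≥0∞) ≤ (∫⁻ x, min (c' x) (E' x) ∂μ) + t := by
    have hpt : ∀ x, g x ≤ min (g x) (E' x) + (g x - E' x) := by
      intro x
      rcases le_total (g x) (E' x) with h | h
      · rw [min_eq_left h]; exact le_self_add
      · rw [min_eq_right h, add_comm, tsub_add_cancel_of_le h]
    calc (1:ℝ≥0∞) = ∫⁻ x, g x ∂μ := hglint1.symm
      _ ≤ ∫⁻ x, (min (g x) (E' x) + (g x - E' x)) ∂μ := lintegral_mono hpt
      _ = (∫⁻ x, min (g x) (E' x) ∂μ) + t := by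
          rw [htdef]
          exact lintegral_add_left (hgmeas.min hE'meas) _
      _ ≤ (∫⁻ x, min (c' x) (E' x) ∂μ) + t :=
          add_le_add (lintegral_mono fun x => min_le_min (hgle x) le_rfl) le_rfl
  set S' : ℝ≥0∞ := ∫⁻ x, ENNReal.ofReal |c x - D x| ∂μ with hS'def
  have claim2 : S' + 2 * ∫⁻ x, min (c' x) (E' x) ∂μ ≤ 1 + 1 := by
    calc S' + 2 * ∫⁻ x, min (c' x) (E' x) ∂μ
        = S' + ∫⁻ x, 2 * min (c' x) (E' x) ∂μ := by
          rw [lintegral_const_mul' 2 _ (by simp : (2:ℝ≥0∞) ≠ ⊤)]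
      _ ≤ ∫⁻ x, (ENNReal.ofReal |c x - D x| + 2 * min (c' x) (E' x)) ∂μ :=
          le_lintegral_add _ _
      _ = ∫⁻ x, (c' x + E' x) ∂μ :=
          lintegral_congr fun x => GH.ofReal_abs_min (c x) (D x) (hc x) (hD0 x)
      _ = (∫⁻ x, c' x ∂μ) + ∫⁻ x, E' x ∂μ := lintegral_add_right _ hE'meas
      _ ≤ 1 + 1 := add_le_add hlintc.le hE'lint
  have havg0 : ∀ x, 0 ≤ GH.avg d k f x := fun x => hD_avg x ▸ hD0 x
  have habsint : Integrable (fun x => |f x - GH.avg d k f x|) μ :=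
    (hfint.integrableOn.sub (GH.integrableOn_avg hd f)).abs
  have tbound : t ≤ ENNReal.ofReal (ε^2/4) := by
    have hae : ∀ᵐ x ∂μ, g x - E' x ≤ ENNReal.ofReal |f x - GH.avg d k f x| := by
      have hmem : ∀ᵐ x ∂μ, x ∈ Set.Icc (0 : Fin d → ℝ) 1 := by
        rw [hμdef]; exact ae_restrict_mem measurableSet_Icc
      have h2 : ∀ᵐ x ∂μ, ENNReal.ofReal (f x) = g₂ x := by
        rw [hμdef]; exact ae_restrict_of_ae hofReal_f
      filter_upwards [hmem, h2] with x hx hfx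
      have hgx : g x = ENNReal.ofReal (f x) := by
        rw [hfx, hg₂def, Set.indicator_of_mem hx]
      have hEx : E' x = ENNReal.ofReal (GH.avg d k f x) := by
        show ENNReal.ofReal (D x) = _
        rw [hD_avg x]
      calc g x - E' x = ENNReal.ofReal (f x) - ENNReal.ofReal (GH.avg d k f x) := by
            rw [hgx, hEx]
        _ = ENNReal.ofReal (f x - GH.avg d k f x) := (ENNReal.ofReal_sub _ (havg0 x)).symm
        _ ≤ ENNReal.ofReal |f x - GH.avg d k f x| :=
            ENNReal.ofReal_le_ofReal (le_abs_self _)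
    calc t ≤ ∫⁻ x, ENNReal.ofReal |f x - GH.avg d k f x| ∂μ := lintegral_mono_ae hae
      _ = ENNReal.ofReal (∫ x, |f x - GH.avg d k f x| ∂μ) :=
          (ofReal_integral_eq_lintegral_ofReal habsint
            (Filter.Eventually.of_forall fun x => abs_nonneg _)).symm
      _ ≤ ENNReal.ofReal (ε^2/4) := ENNReal.ofReal_le_ofReal hcore.le
  have hMfin : 2 * ∫⁻ x, min (c' x) (E' x) ∂μ ≠ ∞ := by
    intro habs
    have : (⊤:ℝ≥0∞) ≤ 1 + 1 := by
      rw [← habs]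
      exact le_add_self.trans claim2
    simp at this
  have hScancel : S' ≤ 2 * t := by
    have h5 : (2:ℝ≥0∞) ≤ 2 * ((∫⁻ x, min (c' x) (E' x) ∂μ) + t) := by
      calc (2:ℝ≥0∞) = 2 * 1 := (mul_one 2).symm
        _ ≤ _ := mul_le_mul_right hmin_le 2
    rw [mul_add] at h5
    have h6 : S' + 2 * ∫⁻ x, min (c' x) (E' x) ∂μ
        ≤ (2 * ∫⁻ x, min (c' x) (E' x) ∂μ) + 2 * t := by
      refine claim2.trans ?_
      calc (1:ℝ≥0∞) + 1 = 2 := by norm_num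
        _ ≤ _ := h5
    rw [add_comm S'] at h6
    exact (ENNReal.add_le_add_iff_left hMfin).1 h6
  have hSfinal : S' < ENNReal.ofReal (ε^2) := by
    calc S' ≤ 2 * t := hScancel
      _ ≤ 2 * ENNReal.ofReal (ε^2/4) := mul_le_mul_right tbound 2
      _ = ENNReal.ofReal (ε^2/2) := by
          rw [show (2:ℝ≥0∞) = ENNReal.ofReal 2 from by simp,
            ← ENNReal.ofReal_mul (by norm_num : (0:ℝ) ≤ 2)]
          congr 1
          ring
      _ < ENNReal.ofReal (ε^2) := by
          rw [ENNReal.ofReal_lt_ofReal_iff (by positivity)]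
          have : (0:ℝ) < ε^2 := by positivity
          linarith
  show (1/2) * ∫ x, (Real.sqrt (c x) - Real.sqrt (D x))^2 ∂μ < ε^2
  by_cases hInt : Integrable (fun x => (Real.sqrt (c x) - Real.sqrt (D x))^2) μ
  · have h0 : 0 ≤ ∫ x, (Real.sqrt (c x) - Real.sqrt (D x))^2 ∂μ :=
      integral_nonneg fun x => sq_nonneg _
    have hIeq : ENNReal.ofReal (∫ x, (Real.sqrt (c x) - Real.sqrt (D x))^2 ∂μ)
        = ∫⁻ x, ENNReal.ofReal ((Real.sqrt (c x) - Real.sqrt (D x))^2) ∂μ :=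
      ofReal_integral_eq_lintegral_ofReal hInt (Filter.Eventually.of_forall fun x => sq_nonneg _)
    have hSle : ∫⁻ x, ENNReal.ofReal ((Real.sqrt (c x) - Real.sqrt (D x))^2) ∂μ ≤ S' :=
      lintegral_mono fun x => ENNReal.ofReal_le_ofReal
        (GH.sqrt_diff_sq_le_abs (hc x) (hD0 x))
    have hlt : ENNReal.ofReal (∫ x, (Real.sqrt (c x) - Real.sqrt (D x))^2 ∂μ)
        < ENNReal.ofReal (ε^2) := by
      rw [hIeq]
      exact lt_of_le_of_lt hSle hSfinal
    have hIlt : ∫ x, (Real.sqrt (c x) - Real.sqrt (D x))^2 ∂μ < ε^2 :=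
      (ENNReal.ofReal_lt_ofReal_iff_of_nonneg h0).1 hlt
    linarith
  · rw [integral_undef hInt]
    have : (0:ℝ) < ε^2 := by positivity
    linarith
end
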